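/- arXiv:1201.6076 — 11 statements merged into one kernel-verified Lean document; each statement's English description precedes it below -/
import Mathlib

section
/- Let R be a commutative ring such that every prime ideal of R is a direct sum of cyclic R-modules. Then for every prime ideal P of R, the quotient ring R/P is a principal ideal domain. -/
/-- An ideal is an internal direct sum of cyclic `R`-modules. -/
def Ideal.IsDirectSumOfCyclics {R : Type} [CommRing R] (I : Ideal R) : Prop :=
  ∃ (ι : Type) (x : ι → R),
    iSupIndep (fun i => Submodule.span R ({x i} : Set R)) ∧
      (⨆ i, Submodule.span R ({x i} : Set R)) = I

/-- If every prime ideal of `R` is a direct sum of cyclic modules, then `R/P` is a PID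
for every prime ideal `P`. -/
theorem quotient_by_prime_isPID_of_primes_directSumOfCyclics (R : Type) [CommRing R]
    (h : ∀ P : Ideal R, P.IsPrime → P.IsDirectSumOfCyclics) :
    ∀ P : Ideal R, P.IsPrime → IsPrincipalIdealRing (R ⧸ P) ∧ IsDomain (R ⧸ P) := by
  intro P hP
  haveI := hP
  refine ⟨?_, Ideal.Quotient.isDomain P⟩
  apply IsPrincipalIdealRing.of_prime
  intro Q' hQ'
  set f := Ideal.Quotient.mk P with hf
  have hsurj : Function.Surjective f := Ideal.Quotient.mk_surjective
  have hQ'eq : Ideal.map f (Ideal.comap f Q') = Q' :=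
    Ideal.map_comap_of_surjective f hsurj Q'
  set Q := Ideal.comap f Q' with hQdef
  haveI hQprime : Q.IsPrime := hQ'.comap f
  obtain ⟨ι, x, hind, hsup⟩ := h Q hQprime
  -- products of distinct generators vanish
  have hmul : ∀ i j : ι, i ≠ j → x i * x j = 0 := by
    intro i j hij
    have h1 : x i * x j ∈ Submodule.span R ({x i} : Set R) :=
      Ideal.mem_span_singleton'.mpr ⟨x j, mul_comm _ _⟩
    have h2 : x i * x j ∈ ⨆ k, ⨆ _ : k ≠ i, Submodule.span R ({x k} : Set R) := by
      refine Submodule.mem_iSup_of_mem j ?_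
      refine Submodule.mem_iSup_of_mem hij.symm ?_
      exact Ideal.mem_span_singleton'.mpr ⟨x i, rfl⟩
    have := (hind i).le_bot (Submodule.mem_inf.mpr ⟨h1, h2⟩)
    simpa using this
  have hmapQ : Ideal.map f Q = ⨆ i, Ideal.span ({f (x i)} : Set (R ⧸ P)) := by
    rw [← hsup, Ideal.map_iSup]
    congr 1
    funext i
    rw [show (Submodule.span R ({x i} : Set R) : Ideal R) = Ideal.span {x i} from rfl,
      Ideal.map_span, Set.image_singleton]
  by_cases hall : ∀ i, x i ∈ P
  · have : Ideal.map f Q = ⊥ := by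
      rw [hmapQ]
      apply le_bot_iff.mp
      apply iSup_le
      intro i
      rw [Ideal.span_le]
      simpa using Ideal.Quotient.eq_zero_iff_mem.mpr (hall i)
    rw [← hQ'eq, this]
    exact ⟨0, Ideal.span_zero.symm⟩
  · push_neg at hall
    obtain ⟨i₀, hi₀⟩ := hall
    have hothers : ∀ j, j ≠ i₀ → x j ∈ P := by
      intro j hj
      have : x i₀ * x j ∈ P := by rw [hmul i₀ j (Ne.symm hj)]; exact P.zero_mem
      exact (hP.mem_or_mem this).resolve_left hi₀
    have : Ideal.map f Q = Ideal.span {f (x i₀)} := by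
      rw [hmapQ]
      apply le_antisymm
      · apply iSup_le
        intro i
        by_cases hi : i = i₀
        · subst hi; exact le_rfl
        · rw [Ideal.span_le]
          have : f (x i) = 0 := Ideal.Quotient.eq_zero_iff_mem.mpr (hothers i hi)
          simp [this]
      · exact le_iSup (fun i => Ideal.span ({f (x i)} : Set (R ⧸ P))) i₀
    rw [← hQ'eq, this]
    exact ⟨f (x i₀), rfl⟩
end

section
/- Let R be a commutative ring such that every prime ideal of R is a direct sum of cyclic R-modules. Then the Krull dimension of R is at most 1. -/
/-- Key lemma: if a prime `P` is a direct sum of cyclics, `q ≤ q'` are primes and `P ≰ q'`,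
then there is `y ∈ P`, `y ∉ q'` with `P ≤ q ⊔ span {y}`. -/
lemma key_lemma {R : Type} [CommRing R] {P q q' : Ideal R} (hq : q.IsPrime)
    (hqq' : q ≤ q') (hP : P.IsDirectSumOfCyclics) (hPq' : ¬ P ≤ q') :
    ∃ y, y ∈ P ∧ y ∉ q' ∧ P ≤ q ⊔ Ideal.span {y} := by
  obtain ⟨ι, x, hind, hsup⟩ := hP
  -- products of distinct generators vanish
  have hzero : ∀ i j, i ≠ j → x i * x j = 0 := by
    intro i j hij
    have h1 : x i * x j ∈ Submodule.span R ({x i} : Set R) := by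
      rw [mul_comm]
      exact Submodule.smul_mem _ (x j) (Submodule.mem_span_singleton_self _)
    have h2 : x i * x j ∈ ⨆ k, ⨆ _ : k ≠ i, Submodule.span R ({x k} : Set R) := by
      refine Submodule.mem_iSup_of_mem j (Submodule.mem_iSup_of_mem (Ne.symm hij) ?_)
      exact Submodule.smul_mem _ (x i) (Submodule.mem_span_singleton_self _)
    exact (Submodule.disjoint_def.mp (hind i)) _ h1 h2
  -- there is a generator outside q'
  have hex : ∃ i, x i ∉ q' := by
    by_contra hc
    push_neg at hc
    exact hPq' (hsup ▸ iSup_le fun i =>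
      (Submodule.span_singleton_le_iff_mem _ _).mpr (hc i))
  obtain ⟨i0, hi0⟩ := hex
  refine ⟨x i0, ?_, hi0, ?_⟩
  · exact hsup ▸ le_iSup (fun i => Submodule.span R ({x i} : Set R)) i0
      (Submodule.mem_span_singleton_self _)
  · rw [← hsup]
    refine iSup_le fun i => ?_
    by_cases hii : i = i0
    · subst hii; exact le_sup_right
    · refine le_trans ?_ le_sup_left
      refine (Submodule.span_singleton_le_iff_mem _ _).mpr ?_
      have := hzero i i0 hii
      rcases hq.mul_mem_iff_mem_or_mem.mp (this ▸ q.zero_mem) with h | h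
      · exact h
      · exact absurd (hqq' h) hi0

/-- If every prime ideal of `R` is a direct sum of cyclic modules, then `dim R ≤ 1`. -/
theorem krullDim_le_one_of_primes_directSumOfCyclics (R : Type) [CommRing R]
    (h : ∀ P : Ideal R, P.IsPrime → P.IsDirectSumOfCyclics) :
    ringKrullDim R ≤ 1 := by
  have hlen : ∀ l : LTSeries (PrimeSpectrum R), l.length ≤ 1 := by
    intro l
    by_contra hc
    push_neg at hc
    have h2 : 2 ≤ l.length := hc
    set p0 := (l ⟨0, by omega⟩).asIdeal with hp0
    set p1 := (l ⟨1, by omega⟩).asIdeal with hp1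
    set p2 := (l ⟨2, by omega⟩).asIdeal with hp2
    have hp0prime : p0.IsPrime := (l ⟨0, by omega⟩).isPrime
    have hp1prime : p1.IsPrime := (l ⟨1, by omega⟩).isPrime
    have hp2prime : p2.IsPrime := (l ⟨2, by omega⟩).isPrime
    have h01 : p0 < p1 := l.strictMono (by simp [Fin.lt_def])
    have h12 : p1 < p2 := l.strictMono (by simp [Fin.lt_def])
    -- apply key lemma to p1 over (p0, p0)
    obtain ⟨x, hxP, hxq, hP1le⟩ :=
      key_lemma (P := p1) hp0prime (le_refl p0) (h p1 hp1prime) (not_le_of_gt h01)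
    -- apply key lemma to p2 over (p0, p1)
    obtain ⟨y, hyP, hyq, hP2le⟩ :=
      key_lemma (P := p2) hp0prime (le_of_lt h01) (h p2 hp2prime) (not_le_of_gt h12)
    -- x ∈ p2 ≤ p0 ⊔ span {y}
    have hx2 : x ∈ p0 ⊔ Ideal.span {y} := hP2le (le_of_lt h12 hxP)
    obtain ⟨a, ha, z, hz, hxaz⟩ := Submodule.mem_sup.mp hx2
    obtain ⟨c, hcz⟩ := Ideal.mem_span_singleton'.mp hz
    -- c * y ∈ p1, y ∉ p1 so c ∈ p1
    have hcy : c * y ∈ p1 := by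
      have heq : c * y = x - a := by rw [hcz, ← hxaz]; ring
      rw [heq]
      exact Ideal.sub_mem _ hxP (le_of_lt h01 ha)
    have hc1 : c ∈ p1 := by
      rcases hp1prime.mul_mem_iff_mem_or_mem.mp hcy with h' | h'
      · exact h'
      · exact absurd h' hyq
    -- c ∈ p0 ⊔ span {x}
    obtain ⟨b, hb, w, hw, hbwc⟩ := Submodule.mem_sup.mp (hP1le hc1)
    obtain ⟨d, hdw⟩ := Ideal.mem_span_singleton'.mp hw
    -- x * (1 - d * y) = a + b * y ∈ p0
    have hkey : x * (1 - d * y) ∈ p0 := by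
      have : x * (1 - d * y) = a + b * y := by
        have h1 : a + c * y = x := by rw [hcz]; exact hxaz
        have h2 : b + d * x = c := by rw [hdw]; exact hbwc
        linear_combination (-1 : R) * h1 - y * h2
      rw [this]
      exact Ideal.add_mem _ ha (Ideal.mul_mem_right _ _ hb)
    have h1p0 : 1 - d * y ∈ p0 := by
      rcases hp0prime.mul_mem_iff_mem_or_mem.mp hkey with h' | h'
      · exact absurd h' hxq
      · exact h'
    have hone : (1 : R) ∈ p2 := by
      have hm1 : 1 - d * y ∈ p2 := h12.le (h01.le h1p0)
      have hm2 : d * y ∈ p2 := Ideal.mul_mem_left _ d hyP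
      have : (1 : R) = (1 - d * y) + d * y := by ring
      rw [this]
      exact Ideal.add_mem _ hm1 hm2
    exact hp2prime.ne_top (Ideal.eq_top_iff_one _ |>.mpr hone)
  have : ringKrullDim R = ⨆ (p : LTSeries (PrimeSpectrum R)), (p.length : WithBot ℕ∞) := rfl
  rw [this]
  exact iSup_le fun l => by exact_mod_cast hlen l
end

section
/- Let (R, M) be a commutative local ring with maximal ideal M, and suppose M = Rx ⊕ Ry ⊕ Rz ⊕ K (internal direct sum of R-submodules) for nonzero elements x, y, z ∈ R and an ideal K of R, where none of Rx, Ry, Rz is a simple R-module. Then the ideal J = R(x+y) + R(x+z) is not a direct sum of cyclic R-modules. -/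
open IsLocalRing

lemma aux_sq_ne (R : Type) [CommRing R] [IsLocalRing R] (x : R) (hx : x ≠ 0)
    (hxs : ¬ IsSimpleModule R (Submodule.span R ({x} : Set R)))
    (hann : ∀ m ∈ maximalIdeal R, ∃ a : R, m * x = a * (x * x)) :
    x * x ≠ 0 := by
  intro h2
  apply hxs
  rw [isSimpleModule_iff_isAtom]
  constructor
  · simpa [Submodule.span_singleton_eq_bot] using hx
  · intro b hb
    by_contra hbne
    obtain ⟨r, hrb, hr0⟩ : ∃ r ∈ b, r ≠ 0 := by
      by_contra hall
      push_neg at hall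
      exact hbne (le_bot_iff.mp fun r hr => (Submodule.mem_bot R).mpr (hall r hr))
    have hrx : r ∈ Submodule.span R {x} := hb.le hrb
    obtain ⟨t, ht⟩ := Submodule.mem_span_singleton.mp hrx
    by_cases hu : IsUnit t
    · have hxb : x ∈ b := by
        have : (↑hu.unit⁻¹ : R) • r ∈ b := b.smul_mem _ hrb
        have hxr : (↑hu.unit⁻¹ : R) • r = x := by
          rw [← ht, smul_smul]
          simp [IsUnit.val_inv_mul]
        rwa [hxr] at this
      exact hb.not_ge ((Submodule.span_singleton_le_iff_mem x b).mpr hxb)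
    · have htm : t ∈ maximalIdeal R := (mem_maximalIdeal t).mpr hu
      obtain ⟨a, ha⟩ := hann t htm
      apply hr0
      rw [← ht, smul_eq_mul, ha, h2, mul_zero]

/-- If `M = Rx ⊕ Ry ⊕ Rz ⊕ K` with none of `Rx`, `Ry`, `Rz` simple, then
`J = R(x+y) + R(x+z)` is not a direct sum of cyclic modules. -/
theorem not_directSumOfCyclics (R : Type) [CommRing R] [IsLocalRing R]
    (x y z : R) (hx : x ≠ 0) (hy : y ≠ 0) (hz : z ≠ 0) (K : Ideal R)
    (hindep : iSupIndep
      ![Submodule.span R ({x} : Set R), Submodule.span R ({y} : Set R),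
        Submodule.span R ({z} : Set R), K])
    (hsum : Submodule.span R ({x} : Set R) ⊔ Submodule.span R ({y} : Set R) ⊔
      Submodule.span R ({z} : Set R) ⊔ K = IsLocalRing.maximalIdeal R)
    (hxs : ¬ IsSimpleModule R (Submodule.span R ({x} : Set R)))
    (hys : ¬ IsSimpleModule R (Submodule.span R ({y} : Set R)))
    (hzs : ¬ IsSimpleModule R (Submodule.span R ({z} : Set R))) :
    ¬ (Ideal.span ({x + y, x + z} : Set R)).IsDirectSumOfCyclics := by
  classical
  rintro ⟨ι, w, hind, hsup⟩
  set fam : Fin 4 → Submodule R R :=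
    ![Submodule.span R {x}, Submodule.span R {y}, Submodule.span R {z}, K] with hfam
  have hmem_other : ∀ (i j : Fin 4), j ≠ i → fam j ≤ ⨆ k, ⨆ _ : k ≠ i, fam k :=
    fun i j hji => le_iSup_of_le j (le_iSup (fun _ => fam j) hji)
  have hdisj : ∀ i : Fin 4, Disjoint (fam i) (⨆ k, ⨆ _ : k ≠ i, fam k) := hindep
  have hzero : ∀ (i j : Fin 4) (r : R), j ≠ i → r ∈ fam i → r ∈ fam j → r = 0 := by
    intro i j r hji hri hrj
    have : r ∈ fam i ⊓ (⨆ k, ⨆ _ : k ≠ i, fam k) := ⟨hri, hmem_other i j hji hrj⟩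
    simpa using (hdisj i).le_bot this
  have span_mem : ∀ (a r : R), r * a ∈ Submodule.span R {a} := fun a r =>
    Submodule.mem_span_singleton.mpr ⟨r, rfl⟩
  -- pairwise products vanish
  have hxy : x * y = 0 := by
    refine hzero 0 1 _ (by decide) ?_ ?_
    · show x * y ∈ Submodule.span R {x}
      rw [mul_comm]; exact span_mem x y
    · exact span_mem y x
  have hxz : x * z = 0 := by
    refine hzero 0 2 _ (by decide) ?_ ?_
    · show x * z ∈ Submodule.span R {x}
      rw [mul_comm]; exact span_mem x z
    · exact span_mem z x
  have hyz : y * z = 0 := by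
    refine hzero 1 2 _ (by decide) ?_ ?_
    · show y * z ∈ Submodule.span R {y}
      rw [mul_comm]; exact span_mem y z
    · exact span_mem z y
  have hKx : ∀ k ∈ K, k * x = 0 := fun k hk =>
    hzero 0 3 _ (by decide) (span_mem x k) (show k * x ∈ K from Ideal.mul_mem_right x K hk)
  have hKy : ∀ k ∈ K, k * y = 0 := fun k hk =>
    hzero 1 3 _ (by decide) (span_mem y k) (show k * y ∈ K from Ideal.mul_mem_right y K hk)
  have hKz : ∀ k ∈ K, k * z = 0 := fun k hk =>
    hzero 2 3 _ (by decide) (span_mem z k) (show k * z ∈ K from Ideal.mul_mem_right z K hk)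
  -- squares are nonzero
  have hann : ∀ (a : R), a ∈ ({x, y, z} : Set R) →
      (∀ b ∈ ({x, y, z} : Set R), b ≠ a → b * a = 0) → (∀ k ∈ K, k * a = 0) →
      ∀ m ∈ maximalIdeal R, ∃ c : R, m * a = c * (a * a) := by
    intro a ha hb hK m hm
    set T : Submodule R R := LinearMap.ker (LinearMap.mulRight R a) with hT
    have hmemT : ∀ r : R, r * a = 0 → r ∈ T := by
      intro r hr
      simp [hT, LinearMap.mem_ker, hr]
    have hle : maximalIdeal R ≤ Submodule.span R {a} ⊔ T := by
      rw [← hsum]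
      have hsing : ∀ b : R, b ∈ ({x, y, z} : Set R) →
          Submodule.span R ({b} : Set R) ≤ Submodule.span R {a} ⊔ T := by
        intro b hbmem
        by_cases hba : b = a
        · subst hba; exact le_trans le_sup_left (le_refl _)
        · refine le_trans ?_ le_sup_right
          rw [Submodule.span_le, Set.singleton_subset_iff]
          exact hmemT b (hb b hbmem hba)
      refine sup_le (sup_le (sup_le ?_ ?_) ?_) ?_
      · exact hsing x (by simp)
      · exact hsing y (by simp)
      · exact hsing z (by simp)
      · refine le_trans ?_ le_sup_right
        intro k hk
        exact hmemT k (hK k hk)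
    obtain ⟨u, hu, v, hv, huv⟩ := Submodule.mem_sup.mp (hle hm)
    obtain ⟨t, ht⟩ := Submodule.mem_span_singleton.mp hu
    have hva : v * a = 0 := by simpa [hT, LinearMap.mem_ker] using hv
    refine ⟨t, ?_⟩
    rw [← huv, add_mul, hva, add_zero, ← ht, smul_eq_mul, mul_assoc]
  have hxx : x * x ≠ 0 := by
    refine aux_sq_ne R x hx hxs (hann x (by simp) ?_ (hKx))
    intro b hb hba
    rcases hb with rfl | rfl | rfl
    · exact absurd rfl hba
    · rw [mul_comm]; exact hxy
    · rw [mul_comm]; exact hxz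
  have hyy : y * y ≠ 0 := by
    refine aux_sq_ne R y hy hys (hann y (by simp) ?_ (hKy))
    intro b hb hba
    rcases hb with rfl | rfl | rfl
    · exact hxy
    · exact absurd rfl hba
    · rw [mul_comm]; exact hyz
  have hzz : z * z ≠ 0 := by
    refine aux_sq_ne R z hz hzs (hann z (by simp) ?_ (hKz))
    intro b hb hba
    rcases hb with rfl | rfl | rfl
    · exact hxz
    · exact hyz
    · exact absurd rfl hba
  have hcomp : ∀ a b c : R, a*x + b*y + c*z = 0 → b*y = 0 ∧ c*z = 0 := by
    intro a b c h
    have h0 : a*x ∈ ⨆ k, ⨆ _ : k ≠ (1:Fin 4), fam k :=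
      hmem_other 1 0 (by decide) (span_mem x a)
    have h2 : c*z ∈ ⨆ k, ⨆ _ : k ≠ (1:Fin 4), fam k :=
      hmem_other 1 2 (by decide) (span_mem z c)
    have hby : b*y = 0 := by
      have hmem : b*y ∈ fam 1 ⊓ (⨆ k, ⨆ _ : k ≠ (1:Fin 4), fam k) := by
        refine Submodule.mem_inf.mpr ⟨show b*y ∈ Submodule.span R {y} from span_mem y b, ?_⟩
        have hrw : b*y = -(a*x) + -(c*z) := by linear_combination h
        rw [hrw]; exact add_mem (neg_mem h0) (neg_mem h2)
      simpa using (hdisj 1).le_bot hmem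
    have h0' : a*x ∈ ⨆ k, ⨆ _ : k ≠ (2:Fin 4), fam k :=
      hmem_other 2 0 (by decide) (span_mem x a)
    have h1' : b*y ∈ ⨆ k, ⨆ _ : k ≠ (2:Fin 4), fam k :=
      hmem_other 2 1 (by decide) (span_mem y b)
    have hcz : c*z = 0 := by
      have hmem : c*z ∈ fam 2 ⊓ (⨆ k, ⨆ _ : k ≠ (2:Fin 4), fam k) := by
        refine Submodule.mem_inf.mpr ⟨show c*z ∈ Submodule.span R {z} from span_mem z c, ?_⟩
        have hrw : c*z = -(a*x) + -(b*y) := by linear_combination h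
        rw [hrw]; exact add_mem (neg_mem h0') (neg_mem h1')
      simpa using (hdisj 2).le_bot hmem
    exact ⟨hby, hcz⟩

  classical
  -- every w i is a combination of x+y, x+z
  have hPQ' : ∀ i : ι, ∃ pq : R × R, pq.1 * (x+y) + pq.2 * (x+z) = w i := by
    intro i
    have hwi : w i ∈ Ideal.span ({x + y, x + z} : Set R) := by
      rw [← hsup]
      exact le_iSup (fun i => Submodule.span R ({w i} : Set R)) i
        (Submodule.mem_span_singleton_self (w i))
    obtain ⟨a, b, hab⟩ := Ideal.mem_span_pair.mp hwi
    exact ⟨(a, b), hab⟩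
  choose PQ hPQ using hPQ'
  set P : ι → R := fun i => (PQ i).1 with hPdef
  set Q : ι → R := fun i => (PQ i).2 with hQdef
  -- sum-of-nonunits helper
  have sum_unit : ∀ (s : Finset ι) (f : ι → R), IsUnit (∑ i ∈ s, f i) →
      ∃ i ∈ s, IsUnit (f i) := by
    intro s f hu
    by_contra hall
    push_neg at hall
    have : (∑ i ∈ s, f i) ∈ maximalIdeal R :=
      Ideal.sum_mem _ fun i hi => (mem_maximalIdeal _).mpr (hall i hi)
    exact (mem_maximalIdeal _).mp this hu
  have unit_add : ∀ a b : R, IsUnit a → ¬ IsUnit b → IsUnit (a + b) := by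
    intro a b ha hb
    by_contra hab
    have h1 : a + b ∈ maximalIdeal R := (mem_maximalIdeal _).mpr hab
    have h2 : b ∈ maximalIdeal R := (mem_maximalIdeal _).mpr hb
    have : a ∈ maximalIdeal R := by
      have := Ideal.sub_mem _ h1 h2
      simpa using this
    exact (mem_maximalIdeal _).mp this ha
  -- representations of x+y and x+z
  have hmem1 : x + y ∈ Submodule.span R (Set.range w) := by
    rw [Submodule.span_range_eq_iSup, hsup]
    exact Ideal.subset_span (by simp)
  have hmem2 : x + z ∈ Submodule.span R (Set.range w) := by
    rw [Submodule.span_range_eq_iSup, hsup]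
    exact Ideal.subset_span (by simp)
  obtain ⟨c, hc⟩ := Finsupp.mem_span_range_iff_exists_finsupp.mp hmem1
  obtain ⟨d, hd⟩ := Finsupp.mem_span_range_iff_exists_finsupp.mp hmem2
  set A : R := ∑ i ∈ c.support, c i * P i with hA
  set B : R := ∑ i ∈ c.support, c i * Q i with hB
  set C : R := ∑ i ∈ d.support, d i * P i with hC
  set D : R := ∑ i ∈ d.support, d i * Q i with hD
  have E1' : (c.sum fun i a => a • w i) = A * (x+y) + B * (x+z) := by
    rw [Finsupp.sum, hA, hB, Finset.sum_mul, Finset.sum_mul, ← Finset.sum_add_distrib]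
    refine Finset.sum_congr rfl fun i _ => ?_
    rw [smul_eq_mul, ← hPQ i]
    ring
  have E1 : A * (x+y) + B * (x+z) = x + y := by rw [← E1', hc]
  have E2' : (d.sum fun i a => a • w i) = C * (x+y) + D * (x+z) := by
    rw [Finsupp.sum, hC, hD, Finset.sum_mul, Finset.sum_mul, ← Finset.sum_add_distrib]
    refine Finset.sum_congr rfl fun i _ => ?_
    rw [smul_eq_mul, ← hPQ i]
    ring
  have E2 : C * (x+y) + D * (x+z) = x + z := by rw [← E2', hd]
  have hcompA := hcomp (1 - A - B) (1 - A) (-B) (by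
    rw [show (1-A-B)*x + (1-A)*y + (-B)*z = (x+y) - (A*(x+y)+B*(x+z)) from by ring, E1,
      sub_self])
  have hcompC := hcomp (1 - C - D) (-C) (1 - D) (by
    rw [show (1-C-D)*x + (-C)*y + (1-D)*z = (x+z) - (C*(x+y)+D*(x+z)) from by ring, E2,
      sub_self])
  have hAu : IsUnit A := by
    by_contra hA'
    have h1A : IsUnit (1 - A) :=
      isUnit_one_sub_self_of_mem_nonunits A (mem_nonunits_iff.mpr hA')
    exact hy (h1A.mul_left_cancel (by rw [mul_zero]; exact hcompA.1))
  have hDu : IsUnit D := by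
    by_contra hD'
    have h1D : IsUnit (1 - D) :=
      isUnit_one_sub_self_of_mem_nonunits D (mem_nonunits_iff.mpr hD')
    exact hz (h1D.mul_left_cancel (by rw [mul_zero]; exact hcompC.2))
  have hBnu : ¬ IsUnit B := by
    intro hB'
    exact hz (hB'.mul_left_cancel (by rw [mul_zero]; linear_combination -hcompA.2))
  -- the main contradiction from two distinct indices
  have final : ∀ i j : ι, i ≠ j → IsUnit (P i) → IsUnit (Q j) → False := by
    intro i j hij hp hs
    have hdisj2 : ∀ r : R, r ∈ Submodule.span R {w i} → r ∈ Submodule.span R {w j} → r = 0 := by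
      intro r h1 h2
      have hle2 : Submodule.span R {w j} ≤
          ⨆ k, ⨆ _ : k ≠ i, Submodule.span R {w k} :=
        le_iSup_of_le j (le_iSup (fun _ => Submodule.span R {w j}) (Ne.symm hij))
      have := (hind i).le_bot ⟨h1, hle2 h2⟩
      simpa using this
    have hv1 : P i * (x+y) + Q i * (x+z) = w i := hPQ i
    have hv2 : P j * (x+y) + Q j * (x+z) = w j := hPQ j
    set p := P i; set q := Q i; set p2 := P j; set s := Q j
    -- step 1 : q is not a unit
    have e1 : (s*z) * (w i) = (q*z) * (w j) := by
      rw [← hv1, ← hv2]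
      linear_combination (s*p - q*p2) * hxz + (s*p - q*p2) * hyz
    have hval1 : (s*z) * (w i) = 0 :=
      hdisj2 _ (span_mem (w i) (s*z)) (e1 ▸ span_mem (w j) (q*z))
    have e1b : (s*z) * (w i) = s*(q*(z*z)) := by
      rw [← hv1]
      linear_combination (s*p + s*q) * hxz + (s*p) * hyz
    have hq0 : q * (z*z) = 0 := hs.mul_left_cancel (by rw [mul_zero, ← e1b]; exact hval1)
    have hqnu : ¬ IsUnit q := fun hqu => hzz (hqu.mul_left_cancel (by rw [mul_zero]; exact hq0))
    -- step 2 : p2 is not a unit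
    have e2 : (p2*y) * (w i) = (p*y) * (w j) := by
      rw [← hv1, ← hv2]
      linear_combination (p2*q - p*s) * hxy + (p2*q - p*s) * hyz
    have hval2 : (p2*y) * (w i) = 0 :=
      hdisj2 _ (span_mem (w i) (p2*y)) (e2 ▸ span_mem (w j) (p*y))
    have e2b : (p2*y) * (w i) = p*(p2*(y*y)) := by
      rw [← hv1]
      linear_combination (p2*p + p2*q) * hxy + (p2*q) * hyz
    have hp20 : p2 * (y*y) = 0 := hp.mul_left_cancel (by rw [mul_zero, ← e2b]; exact hval2)
    have hp2nu : ¬ IsUnit p2 := fun hpu => hyy (hpu.mul_left_cancel (by rw [mul_zero]; exact hp20))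
    -- step 3 : the contradiction
    have hpq : IsUnit (p + q) := unit_add p q hp hqnu
    have hp2s : IsUnit (p2 + s) := by
      rw [add_comm]
      exact unit_add s p2 hs hp2nu
    have e3 : ((p2+s)*x) * (w i) = ((p+q)*x) * (w j) := by
      rw [← hv1, ← hv2]
      linear_combination (s*p - q*p2) * hxy + (p2*q - p*s) * hxz
    have hval3 : ((p2+s)*x) * (w i) = 0 :=
      hdisj2 _ (span_mem (w i) ((p2+s)*x)) (e3 ▸ span_mem (w j) ((p+q)*x))
    have e3b : ((p2+s)*x) * (w i) = (p+q)*((p2+s)*(x*x)) := by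
      rw [← hv1]
      linear_combination ((p2+s)*p) * hxy + ((p2+s)*q) * hxz
    have h0 : (p2+s)*(x*x) = 0 :=
      hpq.mul_left_cancel (by rw [mul_zero, ← e3b]; exact hval3)
    exact hxx (hp2s.mul_left_cancel (by rw [mul_zero]; exact h0))
  -- find the two indices
  obtain ⟨i₁, hi₁s, hu1⟩ := sum_unit c.support _ hAu
  obtain ⟨i₂, hi₂s, hu2⟩ := sum_unit d.support _ hDu
  by_cases hcase : i₁ = i₂
  · subst hcase
    have hPi : IsUnit (P i₁) := isUnit_of_mul_isUnit_right hu1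
    have hQi : IsUnit (Q i₁) := isUnit_of_mul_isUnit_right hu2
    have hci : IsUnit (c i₁) := isUnit_of_mul_isUnit_left hu1
    have hjex : ∃ j ∈ c.support.erase i₁, IsUnit (c j * Q j) := by
      by_contra hall
      push_neg at hall
      have hmsum : (∑ k ∈ c.support.erase i₁, c k * Q k) ∈ maximalIdeal R :=
        Ideal.sum_mem _ fun k hk => (mem_maximalIdeal _).mpr (hall k hk)
      have hBsplit : c i₁ * Q i₁ + ∑ k ∈ c.support.erase i₁, c k * Q k = B :=
        by rw [hB]; exact Finset.add_sum_erase c.support (fun k => c k * Q k) hi₁s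
      have hBm : B ∈ maximalIdeal R := (mem_maximalIdeal _).mpr hBnu
      have : c i₁ * Q i₁ ∈ maximalIdeal R := by
        have := Ideal.sub_mem _ hBm hmsum
        rw [← hBsplit] at this
        simpa using this
      exact (mem_maximalIdeal _).mp this (hci.mul hQi)
    obtain ⟨j, hjmem, hju⟩ := hjex
    have hjne : j ≠ i₁ := (Finset.mem_erase.mp hjmem).1
    exact final i₁ j (Ne.symm hjne) hPi (isUnit_of_mul_isUnit_right hju)
  · exact final i₁ i₂ hcase (isUnit_of_mul_isUnit_right hu1) (isUnit_of_mul_isUnit_right hu2)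
end

section
/- A commutative ring R is local if and only if whenever ⊕_{i=1}^n Rx_i ≅ ⊕_{j=1}^m Ry_j as R-modules, where each Rx_i and Ry_j is a nonzero cyclic R-module, it follows that n = m. -/
open DirectSum

section Aux

open TensorProduct

variable (R : Type) [CommRing R]

/-- In a local ring, the direct sum of proper cyclic quotients tensored with the residue
field is a direct sum of copies of the residue field. -/
noncomputable def cyclicSumResidueEquiv [IsLocalRing R] (n : ℕ) (I : Fin n → Ideal R)
    (hI : ∀ i, I i ≠ ⊤) :
    (⨁ i, R ⧸ I i) ⊗[R] (R ⧸ IsLocalRing.maximalIdeal R) ≃ₗ[R]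
      ⨁ _i : Fin n, R ⧸ IsLocalRing.maximalIdeal R :=
  (TensorProduct.directSumLeft R R (fun i => R ⧸ I i) (R ⧸ IsLocalRing.maximalIdeal R)) ≪≫ₗ
  DFinsupp.mapRange.linearEquiv (fun i =>
    (quotTensorEquivQuotSMul (R ⧸ IsLocalRing.maximalIdeal R) (I i)) ≪≫ₗ
    Submodule.quotEquivOfEqBot _ (by
      rw [eq_bot_iff, Submodule.smul_le]
      intro r hr x _
      obtain ⟨y, rfl⟩ := Ideal.Quotient.mk_surjective x
      have : r • (Ideal.Quotient.mk (IsLocalRing.maximalIdeal R) y) =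
          Ideal.Quotient.mk _ (r * y) := rfl
      rw [this, Submodule.mem_bot, Ideal.Quotient.eq_zero_iff_mem]
      exact Ideal.mul_mem_right y _ (IsLocalRing.le_maximalIdeal (hI i) hr)))

lemma finrank_directSum_residue [IsLocalRing R] (n : ℕ) :
    Module.finrank (R ⧸ IsLocalRing.maximalIdeal R)
      (⨁ _i : Fin n, R ⧸ IsLocalRing.maximalIdeal R) = n := by
  rw [(DirectSum.linearEquivFunOnFintype (R ⧸ IsLocalRing.maximalIdeal R) (Fin n)
      (fun _ => R ⧸ IsLocalRing.maximalIdeal R)).finrank_eq]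
  simp [Module.finrank_fintype_fun_eq_card]

end Aux

/-- A (nonzero) commutative ring is local iff finite direct sums of nonzero cyclic modules
have a well-defined number of summands. -/
theorem isLocalRing_iff_invariant_number_of_cyclic_summands (R : Type) [CommRing R]
    [Nontrivial R] :
    IsLocalRing R ↔
      ∀ (n m : ℕ) (I : Fin n → Ideal R) (J : Fin m → Ideal R),
        (∀ i, I i ≠ ⊤) → (∀ j, J j ≠ ⊤) →
        Nonempty ((⨁ i, R ⧸ I i) ≃ₗ[R] ⨁ j, R ⧸ J j) → n = m := by
  constructor
  · intro hloc n m I J hI hJ ⟨e⟩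
    letI k := R ⧸ IsLocalRing.maximalIdeal R
    -- tensor with residue field
    let e' : (⨁ _i : Fin n, R ⧸ IsLocalRing.maximalIdeal R) ≃ₗ[R]
        ⨁ _j : Fin m, R ⧸ IsLocalRing.maximalIdeal R :=
      (cyclicSumResidueEquiv R n I hI).symm ≪≫ₗ
        (LinearEquiv.rTensor (R ⧸ IsLocalRing.maximalIdeal R) e) ≪≫ₗ
        cyclicSumResidueEquiv R m J hJ
    -- upgrade to residue-field linearity
    let e'' := e'.extendScalarsOfSurjective
      (Ideal.Quotient.mk_surjective (I := IsLocalRing.maximalIdeal R))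
    have h1 := finrank_directSum_residue R n
    have h2 := finrank_directSum_residue R m
    rw [e''.finrank_eq] at h1
    rw [h2] at h1
    exact h1.symm
  · intro h
    by_contra hnl
    obtain ⟨M, hM⟩ := Ideal.exists_maximal R
    have : ¬ ∃! I : Ideal R, I.IsMaximal := fun hu => hnl (IsLocalRing.of_unique_max_ideal hu)
    have : ∃ N : Ideal R, N.IsMaximal ∧ N ≠ M := by
      by_contra hc
      push_neg at hc
      exact this ⟨M, hM, fun N hN => hc N hN⟩
    obtain ⟨N, hN, hNM⟩ := this
    have hcop : IsCoprime M N := Ideal.isCoprime_iff_sup_eq.mpr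
      (hM.coprime_of_ne hN hNM.symm)
    -- the ring equiv R/(M⊓N) ≃ R/M × R/N as a linear equiv
    let re := Ideal.quotientInfEquivQuotientProd M N hcop
    let le : (R ⧸ (M ⊓ N)) ≃ₗ[R] (R ⧸ M) × (R ⧸ N) :=
      { re with
        map_smul' := fun r x => by
          obtain ⟨y, rfl⟩ := Ideal.Quotient.mk_surjective x
          show re (r • Ideal.Quotient.mk (M ⊓ N) y) = r • re (Ideal.Quotient.mk (M ⊓ N) y)
          have : r • Ideal.Quotient.mk (M ⊓ N) y = Ideal.Quotient.mk (M ⊓ N) (r * y) := rfl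
          rw [this]
          ext <;> simp [re] <;> rfl }
    let Iv : Fin 1 → Ideal R := fun _ => M ⊓ N
    let Jv : Fin 2 → Ideal R := ![M, N]
    have hIv : ∀ i, Iv i ≠ ⊤ := fun _ => fun ht => hM.ne_top (top_le_iff.mp (ht ▸ inf_le_left))
    have hJv : ∀ j, Jv j ≠ ⊤ := by
      intro j
      fin_cases j
      · exact hM.ne_top
      · exact hN.ne_top
    have key : Nonempty ((⨁ i, R ⧸ Iv i) ≃ₗ[R] ⨁ j, R ⧸ Jv j) := by
      refine ⟨?_⟩
      refine (DirectSum.linearEquivFunOnFintype R (Fin 1) (fun i => R ⧸ Iv i)) ≪≫ₗ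
        (LinearEquiv.funUnique (Fin 1) R (R ⧸ (M ⊓ N))) ≪≫ₗ le ≪≫ₗ
        ?_ ≪≫ₗ
        (DirectSum.linearEquivFunOnFintype R (Fin 2) (fun j => R ⧸ Jv j)).symm
      exact (LinearEquiv.piFinTwo R (fun j => R ⧸ Jv j)).symm
    exact absurd (h 1 2 Iv Jv hIv hJv key) (by norm_num)
end

section
/- Let R be a commutative local ring and whenever ⊕_{i∈I} Rx_i ≅ ⊕_{j∈J} Ry_j as R-modules with all Rx_i, Ry_j nonzero cyclic R-modules, then |I| = |J|. -/
open DirectSum TensorProduct IsLocalRing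

section Aux

variable (R : Type) [CommRing R] [IsLocalRing R]

/-- For a proper ideal `I` of a local ring, `k ⊗ R/I ≃ k` where `k` is the residue field. -/
noncomputable def residueTensorCyclic (I : Ideal R) (hI : I ≠ ⊤) :
    (ResidueField R) ⊗[R] (R ⧸ I) ≃ₗ[R] ResidueField R := by
  have hle : I ≤ maximalIdeal R := le_maximalIdeal hI
  have hmap : (maximalIdeal R) • (⊤ : Submodule R (R ⧸ I)) =
      Submodule.map I.mkQ (maximalIdeal R) := by
    have h1 : (⊤ : Submodule R (R ⧸ I)) = Submodule.map I.mkQ ⊤ := by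
      rw [Submodule.map_top, Submodule.range_mkQ]
    rw [h1, ← Submodule.map_smul'', Ideal.smul_eq_mul, Ideal.mul_top]
  exact (quotTensorEquivQuotSMul (R ⧸ I) (maximalIdeal R)) ≪≫ₗ
    (Submodule.quotEquivOfEq _ _ hmap) ≪≫ₗ
    (Submodule.quotientQuotientEquivQuotient I (maximalIdeal R) hle)

end Aux

/-- Over a commutative local ring, two direct sums of nonzero cyclic modules that are
isomorphic have index sets of the same cardinality. -/
theorem card_eq_of_directSum_cyclics_iso (R : Type) [CommRing R] [IsLocalRing R]
    (ι κ : Type) (I : ι → Ideal R) (J : κ → Ideal R)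
    (hI : ∀ i, I i ≠ ⊤) (hJ : ∀ j, J j ≠ ⊤)
    (hiso : Nonempty ((⨁ i, R ⧸ I i) ≃ₗ[R] ⨁ j, R ⧸ J j)) :
    Cardinal.mk ι = Cardinal.mk κ := by
  classical
  obtain ⟨e⟩ := hiso
  set k := ResidueField R
  -- tensor the iso with the residue field
  have E1 : k ⊗[R] (⨁ i, R ⧸ I i) ≃ₗ[R] k ⊗[R] (⨁ j, R ⧸ J j) :=
    TensorProduct.congr (LinearEquiv.refl R k) e
  have E2 : k ⊗[R] (⨁ i, R ⧸ I i) ≃ₗ[R] ⨁ _ : ι, k :=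
    (TensorProduct.directSumRight R R k (fun i => R ⧸ I i)) ≪≫ₗ
      (DFinsupp.mapRange.linearEquiv (fun i => residueTensorCyclic R (I i) (hI i)))
  have E3 : k ⊗[R] (⨁ j, R ⧸ J j) ≃ₗ[R] ⨁ _ : κ, k :=
    (TensorProduct.directSumRight R R k (fun j => R ⧸ J j)) ≪≫ₗ
      (DFinsupp.mapRange.linearEquiv (fun j => residueTensorCyclic R (J j) (hJ j)))
  have F : (⨁ _ : ι, k) ≃ₗ[R] ⨁ _ : κ, k := E2.symm ≪≫ₗ E1 ≪≫ₗ E3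
  have hsurj : Function.Surjective (algebraMap R k) := residue_surjective
  have F' : (⨁ _ : ι, k) ≃ₗ[k] ⨁ _ : κ, k := F.extendScalarsOfSurjective hsurj
  have G : (ι →₀ k) ≃ₗ[k] (κ →₀ k) :=
    (finsuppLEquivDirectSum k k ι) ≪≫ₗ F' ≪≫ₗ (finsuppLEquivDirectSum k k κ).symm
  calc Cardinal.mk ι = Module.rank k (ι →₀ k) := (rank_finsupp_self' (R := k)).symm
    _ = Module.rank k (κ →₀ k) := G.rank_eq
    _ = Cardinal.mk κ := rank_finsupp_self' (R := k)
end

section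
/- Let (R, M) be a commutative local ring such that every ideal of R is a direct sum of cyclic R-modules. Then Spec(R) has at most 3 elements. -/
open Submodule IsLocalRing


section Aux
variable {R : Type} [CommRing R]

/-- Distinct generators in an independent family of cyclic submodules multiply to zero. -/
lemma aux_mul_eq_zero {ι : Type} {x : ι → R}
    (hind : iSupIndep (fun i => Submodule.span R ({x i} : Set R)))
    {i j : ι} (hij : i ≠ j) : x i * x j = 0 := by
  have h1 : x i * x j ∈ Submodule.span R ({x i} : Set R) :=
    Submodule.mem_span_singleton.mpr ⟨x j, by rw [smul_eq_mul]; ring⟩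
  have h2 : x i * x j ∈ ⨆ (k) (_ : k ≠ i), Submodule.span R ({x k} : Set R) := by
    refine Submodule.mem_iSup_of_mem j (Submodule.mem_iSup_of_mem hij.symm ?_)
    exact Submodule.mem_span_singleton.mpr ⟨x i, by rw [smul_eq_mul]⟩
  exact Submodule.disjoint_def.mp (hind i) _ h1 h2

/-- Membership in a supremum of cyclic modules gives a finite sum representation. -/
lemma aux_mem_iSup {ι : Type} {x : ι → R} {z : R}
    (hz : z ∈ ⨆ i, Submodule.span R ({x i} : Set R)) :
    ∃ c : ι →₀ R, (∑ t ∈ c.support, c t * x t) = z := by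
  rw [← Submodule.span_range_eq_iSup] at hz
  obtain ⟨c, hc⟩ := Finsupp.mem_span_range_iff_exists_finsupp.mp hz
  exact ⟨c, by simpa [Finsupp.sum, smul_eq_mul] using hc⟩

/-- Component splitting for three distinct indices. -/
lemma aux_split {ι : Type} {x : ι → R}
    (hind : iSupIndep (fun i => Submodule.span R ({x i} : Set R)))
    {i j k : ι} (hij : i ≠ j) (hik : i ≠ k) (hjk : j ≠ k)
    {α β γ : R}
    (hsum : α * (x i * x i) + β * (x j * x j) + γ * (x k * x k) = 0) :
    α * (x i * x i) = 0 ∧ β * (x j * x j) = 0 ∧ γ * (x k * x k) = 0 := by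
  have mem_single : ∀ (t : ι) (r : R), r * (x t * x t) ∈ Submodule.span R ({x t} : Set R) :=
    fun t r => Submodule.mem_span_singleton.mpr ⟨r * x t, by rw [smul_eq_mul]; ring⟩
  have mem_other : ∀ (t t' : ι), t' ≠ t → ∀ r : R,
      r * (x t' * x t') ∈ ⨆ (u) (_ : u ≠ t), Submodule.span R ({x u} : Set R) :=
    fun t t' h r => Submodule.mem_iSup_of_mem t' (Submodule.mem_iSup_of_mem h (mem_single t' r))
  have hi0 : α * (x i * x i) = 0 := by
    have h2 : α * (x i * x i) ∈ ⨆ (u) (_ : u ≠ i), Submodule.span R ({x u} : Set R) := by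
      have he : α * (x i * x i) = (-β) * (x j * x j) + (-γ) * (x k * x k) := by
        linear_combination hsum
      rw [he]
      exact add_mem (mem_other i j hij.symm _) (mem_other i k hik.symm _)
    exact Submodule.disjoint_def.mp (hind i) _ (mem_single i α) h2
  have hj0 : β * (x j * x j) = 0 := by
    have h2 : β * (x j * x j) ∈ ⨆ (u) (_ : u ≠ j), Submodule.span R ({x u} : Set R) := by
      have he : β * (x j * x j) = (-γ) * (x k * x k) := by linear_combination hsum - hi0
      rw [he]
      exact mem_other j k hjk.symm _
    exact Submodule.disjoint_def.mp (hind j) _ (mem_single j β) h2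
  exact ⟨hi0, hj0, by linear_combination hsum - hi0 - hj0⟩

end Aux

section Local
variable {R : Type} [CommRing R] [IsLocalRing R]


/-- Every nonmaximal prime misses exactly one generator of `M`. -/
lemma exists_good_index {ι : Type} {x : ι → R}
    (hind : iSupIndep (fun i => Submodule.span R ({x i} : Set R)))
    (hsup : (⨆ i, Submodule.span R ({x i} : Set R)) = maximalIdeal R)
    {P : Ideal R} (hP : P.IsPrime) (hPM : P ≠ maximalIdeal R) :
    ∃ i, x i ∉ P ∧ ∀ j, j ≠ i → x j ∈ P := by
  have hex : ∃ i, x i ∉ P := by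
    by_contra hall
    push_neg at hall
    apply hPM
    refine le_antisymm (le_maximalIdeal hP.ne_top) ?_
    rw [← hsup]
    exact iSup_le fun t => Submodule.span_le.mpr (Set.singleton_subset_iff.mpr (hall t))
  obtain ⟨i, hi⟩ := hex
  refine ⟨i, hi, fun j hj => ?_⟩
  have h0 : x j * x i ∈ P := by
    rw [aux_mul_eq_zero hind hj]; exact P.zero_mem
  exact (hP.mem_or_mem h0).resolve_right hi

lemma xi_mem_M {ι : Type} {x : ι → R}
    (hsup : (⨆ i, Submodule.span R ({x i} : Set R)) = maximalIdeal R) (i : ι) :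
    x i ∈ maximalIdeal R := by
  rw [← hsup]
  exact Submodule.mem_iSup_of_mem i (Submodule.mem_span_singleton_self _)

/-- Lemma B: two nonmaximal primes missing the same generator are comparable. -/
lemma same_index_le (h : ∀ I : Ideal R, I.IsDirectSumOfCyclics)
    {ι : Type} {x : ι → R}
    (hsup : (⨆ i, Submodule.span R ({x i} : Set R)) = maximalIdeal R)
    {P Q : Ideal R} (hP : P.IsPrime) (hQ : Q.IsPrime) {i : ι}
    (hxP : x i ∉ P) (hxQ : x i ∉ Q)
    (hallP : ∀ j, j ≠ i → x j ∈ P)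
    (hallQ : ∀ j, j ≠ i → x j ∈ Q) : P ≤ Q := by
  by_contra hnle
  obtain ⟨d, hdP, hdQ⟩ := SetLike.not_le_iff_exists.mp hnle
  obtain ⟨κ, z, hzind, hzsup⟩ := h (P ⊔ Q)
  -- some generator of P ⊔ Q is outside Q
  have hex : ∃ t, z t ∉ Q := by
    by_contra hall
    push_neg at hall
    have : P ⊔ Q ≤ Q := by
      rw [← hzsup]
      exact iSup_le fun t => Submodule.span_le.mpr (Set.singleton_subset_iff.mpr (hall t))
    exact hdQ (this (Submodule.mem_sup_left hdP))
  obtain ⟨t₀, ht₀⟩ := hex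
  have hz₀mem : z t₀ ∈ P ⊔ Q := by
    rw [← hzsup]
    exact Submodule.mem_iSup_of_mem t₀ (Submodule.mem_span_singleton_self _)
  obtain ⟨p, hp, q, hq, hpq⟩ := Submodule.mem_sup.mp hz₀mem
  have hpQ : p ∉ Q := by
    intro hmem
    exact ht₀ (by rw [← hpq]; exact Q.add_mem hmem hq)
  -- P ⊔ Q ≤ Q ⊔ span {p}
  have hPQle : P ⊔ Q ≤ Q ⊔ Submodule.span R ({p} : Set R) := by
    rw [← hzsup]
    refine iSup_le fun t => ?_
    by_cases ht : t = t₀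
    · subst ht
      refine Submodule.span_le.mpr (Set.singleton_subset_iff.mpr ?_)
      exact Submodule.mem_sup.mpr ⟨q, hq, p, Submodule.mem_span_singleton_self _, by
        rw [← hpq]; ring⟩
    · have hzt : z t ∈ Q := by
        have h0 : z t * z t₀ ∈ Q := by
          rw [aux_mul_eq_zero hzind ht]; exact Q.zero_mem
        exact (hQ.mem_or_mem h0).resolve_right ht₀
      exact le_trans (Submodule.span_le.mpr (Set.singleton_subset_iff.mpr hzt)) le_sup_left
  -- decompose p over the generators of M
  have hpM : p ∈ ⨆ i, Submodule.span R ({x i} : Set R) := by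
    rw [hsup]
    exact le_maximalIdeal hP.ne_top hp
  obtain ⟨c, hc⟩ := aux_mem_iSup hpM
  classical
  set n : R := ∑ t ∈ c.support.erase i, c t * x t with hn
  have hsplit : p = c i * x i + n := by
    by_cases hi : i ∈ c.support
    · rw [hn, ← hc]
      exact (Finset.add_sum_erase _ _ hi).symm
    · have hci : c i = 0 := Finsupp.notMem_support_iff.mp hi
      rw [hn, Finset.erase_eq_of_notMem hi, hc, hci, zero_mul, zero_add]
  have hnQ : n ∈ Q := Ideal.sum_mem _ fun t ht =>
    Q.mul_mem_left _ (hallQ t (Finset.ne_of_mem_erase ht))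
  have hnP : n ∈ P := Ideal.sum_mem _ fun t ht =>
    P.mul_mem_left _ (hallP t (Finset.ne_of_mem_erase ht))
  have hciP : c i ∈ P := by
    have hmem : c i * x i ∈ P := by
      have he : c i * x i = p - n := by linear_combination -hsplit
      rw [he]; exact sub_mem hp hnP
    exact (hP.mem_or_mem hmem).resolve_right hxP
  have hciA : c i ∈ Q ⊔ Submodule.span R ({p} : Set R) :=
    hPQle (Submodule.mem_sup_left hciP)
  obtain ⟨q₁, hq₁, w, hw, hciEq⟩ := Submodule.mem_sup.mp hciA
  obtain ⟨r, hr⟩ := Submodule.mem_span_singleton.mp hw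
  have hr' : r * p = w := by rw [← hr, smul_eq_mul]
  have key : p * (1 - r * x i) = q₁ * x i + n := by
    linear_combination hsplit - (x i) * hciEq - (x i) * hr'
  have hkey_mem : p * (1 - r * x i) ∈ Q := by
    rw [key]; exact Q.add_mem (Ideal.mul_mem_right _ _ hq₁) hnQ
  rcases hQ.mem_or_mem hkey_mem with h1 | h1
  · exact hpQ h1
  · have hone : (1 : R) ∈ maximalIdeal R := by
      have h1M : 1 - r * x i ∈ maximalIdeal R := le_maximalIdeal hQ.ne_top h1
      have h2M : r * x i ∈ maximalIdeal R := Ideal.mul_mem_left _ r (xi_mem_M hsup i)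
      simpa using add_mem h1M h2M
    exact (maximalIdeal.isMaximal R).ne_top ((Ideal.eq_top_iff_one _).mpr hone)

/-- Peeling a prime twice: if `a * (b * b) = 0` and `b ∉ P` then `a ∈ P`. -/
lemma peel2 {P : Ideal R} (hP : P.IsPrime) {a b : R}
    (heq : a * (b * b) = 0) (hb : b ∉ P) : a ∈ P := by
  have h0 : a * b * b ∈ P := by
    rw [show a * b * b = a * (b * b) by ring, heq]; exact P.zero_mem
  exact (hP.mem_or_mem ((hP.mem_or_mem h0).resolve_right hb)).resolve_right hb

lemma peel2' {P : Ideal R} (hP : P.IsPrime) {a b : R}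
    (heq : a * (b * b) ∈ P) (hb : b ∉ P) : a ∈ P := by
  have h0 : a * b * b ∈ P := by rw [show a * b * b = a * (b * b) by ring]; exact heq
  exact (hP.mem_or_mem ((hP.mem_or_mem h0).resolve_right hb)).resolve_right hb

/-- Lemma C: there are no three nonmaximal primes missing three distinct generators. -/
lemma no_three (h : ∀ I : Ideal R, I.IsDirectSumOfCyclics)
    {ι : Type} {x : ι → R}
    (hind : iSupIndep (fun i => Submodule.span R ({x i} : Set R)))
    (hsup : (⨆ i, Submodule.span R ({x i} : Set R)) = maximalIdeal R)
    {Pi Pj Pk : Ideal R} (hPi : Pi.IsPrime) (hPj : Pj.IsPrime) (hPk : Pk.IsPrime)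
    {i j k : ι} (hij : i ≠ j) (hik : i ≠ k) (hjk : j ≠ k)
    (hi : x i ∉ Pi) (hj : x j ∉ Pj) (hk : x k ∉ Pk) : False := by
  classical
  have hxij : x i * x j = 0 := aux_mul_eq_zero hind hij
  have hxik : x i * x k = 0 := aux_mul_eq_zero hind hik
  have hxjk : x j * x k = 0 := aux_mul_eq_zero hind hjk
  have hMprime : (maximalIdeal R).IsPrime := (maximalIdeal.isMaximal R).isPrime
  have hMne : (maximalIdeal R) ≠ ⊤ := (maximalIdeal.isMaximal R).ne_top
  obtain ⟨κ, z, hzind, hzsup⟩ := h (Ideal.span {x i + x j, x j + x k})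
  have hzmem : ∀ t, ∃ a b, a * (x i + x j) + b * (x j + x k) = z t := by
    intro t
    have hm : z t ∈ ⨆ t, Submodule.span R ({z t} : Set R) :=
      Submodule.mem_iSup_of_mem t (Submodule.mem_span_singleton_self _)
    rw [hzsup] at hm
    exact Ideal.mem_span_pair.mp hm
  choose s w hz using hzmem
  -- expansions of u and v over the z's
  have humem : x i + x j ∈ ⨆ t, Submodule.span R ({z t} : Set R) := by
    rw [hzsup]; exact Ideal.subset_span (Set.mem_insert _ _)
  have hvmem : x j + x k ∈ ⨆ t, Submodule.span R ({z t} : Set R) := by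
    rw [hzsup]; exact Ideal.subset_span (Set.mem_insert_of_mem _ rfl)
  obtain ⟨c, hc⟩ := aux_mem_iSup humem
  obtain ⟨d, hd⟩ := aux_mem_iSup hvmem
  -- pointwise multiplication identities
  have hZi : ∀ t, z t * x i = s t * (x i * x i) := fun t => by
    linear_combination (-(x i)) * (hz t) + (s t + w t) * hxij + (w t) * hxik
  have hZk : ∀ t, z t * x k = w t * (x k * x k) := fun t => by
    linear_combination (-(x k)) * (hz t) + (s t) * hxik + (s t + w t) * hxjk
  -- pairwise products: component memberships
  have hpair : ∀ t₁ t₂, t₁ ≠ t₂ →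
      s t₁ * s t₂ ∈ Pi ∧ (s t₁ + w t₁) * (s t₂ + w t₂) ∈ Pj ∧ w t₁ * w t₂ ∈ Pk := by
    intro t₁ t₂ hne
    have hzz : z t₁ * z t₂ = 0 := aux_mul_eq_zero hzind hne
    rw [← hz t₁, ← hz t₂] at hzz
    have big : s t₁ * s t₂ * (x i * x i) + (s t₁ + w t₁) * (s t₂ + w t₂) * (x j * x j)
        + w t₁ * w t₂ * (x k * x k) = 0 := by
      linear_combination hzz
        - (2 * s t₁ * s t₂ + s t₁ * w t₂ + s t₂ * w t₁) * hxij
        - (s t₁ * w t₂ + s t₂ * w t₁) * hxik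
        - (2 * w t₁ * w t₂ + s t₁ * w t₂ + s t₂ * w t₁) * hxjk
    obtain ⟨h1, h2, h3⟩ := aux_split hind hij hik hjk big
    exact ⟨peel2 hPi h1 hi, peel2 hPj h2 hj, peel2 hPk h3 hk⟩
  have hssM : ∀ t₁ t₂, t₁ ≠ t₂ → s t₁ * s t₂ ∈ maximalIdeal R := fun t₁ t₂ hne =>
    le_maximalIdeal hPi.ne_top (hpair t₁ t₂ hne).1
  have hmixM : ∀ t₁ t₂, t₁ ≠ t₂ → (s t₁ + w t₁) * (s t₂ + w t₂) ∈ maximalIdeal R :=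
    fun t₁ t₂ hne => le_maximalIdeal hPj.ne_top (hpair t₁ t₂ hne).2.1
  have hwwM : ∀ t₁ t₂, t₁ ≠ t₂ → w t₁ * w t₂ ∈ maximalIdeal R := fun t₁ t₂ hne =>
    le_maximalIdeal hPk.ne_top (hpair t₁ t₂ hne).2.2
  -- from u = ∑ c t • z t, multiplied by x i : find τ with s τ a unit
  have e1 : (∑ t ∈ c.support, c t * z t) * x i
      = (∑ t ∈ c.support, c t * s t) * (x i * x i) := by
    rw [Finset.sum_mul, Finset.sum_mul]
    refine Finset.sum_congr rfl fun t _ => ?_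
    rw [mul_assoc, hZi t]; ring
  rw [hc] at e1
  have key1 : (1 - ∑ t ∈ c.support, c t * s t) * (x i * x i) = 0 := by
    linear_combination e1 - hxij
  have h1S : (1 - ∑ t ∈ c.support, c t * s t) ∈ Pi := peel2 hPi key1 hi
  have hSnotM : (∑ t ∈ c.support, c t * s t) ∉ maximalIdeal R := by
    intro hS
    have : (1 : R) ∈ maximalIdeal R := by
      have := add_mem (le_maximalIdeal hPi.ne_top h1S) hS
      simpa using this
    exact hMne ((Ideal.eq_top_iff_one _).mpr this)
  have hex1 : ∃ t ∈ c.support, c t * s t ∉ maximalIdeal R := by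
    by_contra hall
    push_neg at hall
    exact hSnotM (Ideal.sum_mem _ hall)
  obtain ⟨τ, hτsupp, hτ⟩ := hex1
  have hsτ : s τ ∉ maximalIdeal R := fun hm => hτ (Ideal.mul_mem_left _ _ hm)
  -- from v = ∑ d t • z t, multiplied by x k : find σ with w σ a unit
  have e2 : (∑ t ∈ d.support, d t * z t) * x k
      = (∑ t ∈ d.support, d t * w t) * (x k * x k) := by
    rw [Finset.sum_mul, Finset.sum_mul]
    refine Finset.sum_congr rfl fun t _ => ?_
    rw [mul_assoc, hZk t]; ring
  rw [hd] at e2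
  have key2 : (1 - ∑ t ∈ d.support, d t * w t) * (x k * x k) = 0 := by
    linear_combination e2 - hxjk
  have h1T : (1 - ∑ t ∈ d.support, d t * w t) ∈ Pk := peel2 hPk key2 hk
  have hTnotM : (∑ t ∈ d.support, d t * w t) ∉ maximalIdeal R := by
    intro hT
    have : (1 : R) ∈ maximalIdeal R := by
      have := add_mem (le_maximalIdeal hPk.ne_top h1T) hT
      simpa using this
    exact hMne ((Ideal.eq_top_iff_one _).mpr this)
  have hex2 : ∃ t ∈ d.support, d t * w t ∉ maximalIdeal R := by
    by_contra hall
    push_neg at hall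
    exact hTnotM (Ideal.sum_mem _ hall)
  obtain ⟨σ, hσsupp, hσ⟩ := hex2
  have hwσ : w σ ∉ maximalIdeal R := fun hm => hσ (Ideal.mul_mem_left _ _ hm)
  -- from u * x k = 0 : ∑ c t * w t ∈ Pk ⊆ M
  have e3 : (∑ t ∈ c.support, c t * z t) * x k
      = (∑ t ∈ c.support, c t * w t) * (x k * x k) := by
    rw [Finset.sum_mul, Finset.sum_mul]
    refine Finset.sum_congr rfl fun t _ => ?_
    rw [mul_assoc, hZk t]; ring
  rw [hc] at e3
  have key3 : (∑ t ∈ c.support, c t * w t) * (x k * x k) = 0 := by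
    linear_combination -e3 + hxik + hxjk
  have hCW : (∑ t ∈ c.support, c t * w t) ∈ maximalIdeal R :=
    le_maximalIdeal hPk.ne_top (peel2 hPk key3 hk)
  -- final case analysis
  by_cases hts : τ = σ
  · subst hts
    have hrest : ∑ t ∈ c.support.erase τ, c t * w t ∈ maximalIdeal R := by
      refine Ideal.sum_mem _ fun t ht => ?_
      have hwt : w t ∈ maximalIdeal R :=
        (hMprime.mem_or_mem (hwwM t τ (Finset.ne_of_mem_erase ht))).resolve_right hwσ
      exact Ideal.mul_mem_left _ _ hwt
    have hcτwτ : c τ * w τ ∈ maximalIdeal R := by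
      have hsum := Finset.add_sum_erase c.support (fun t => c t * w t) hτsupp
      have : c τ * w τ = (∑ t ∈ c.support, c t * w t)
          - ∑ t ∈ c.support.erase τ, c t * w t := by
        rw [← hsum]; ring
      rw [this]; exact sub_mem hCW hrest
    have hcτ : c τ ∈ maximalIdeal R := (hMprime.mem_or_mem hcτwτ).resolve_right hwσ
    exact hτ (Ideal.mul_mem_right _ _ hcτ)
  · have hsσM : s σ ∈ maximalIdeal R :=
      (hMprime.mem_or_mem (hssM σ τ fun h' => hts h'.symm)).resolve_right hsτ
    have hwτM : w τ ∈ maximalIdeal R :=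
      (hMprime.mem_or_mem (hwwM τ σ hts)).resolve_right hwσ
    rcases hMprime.mem_or_mem (hmixM τ σ hts) with hm | hm
    · apply hsτ
      have : s τ = (s τ + w τ) - w τ := by ring
      rw [this]; exact sub_mem hm hwτM
    · apply hwσ
      have : w σ = (s σ + w σ) - s σ := by ring
      rw [this]; exact sub_mem hm hsσM

end Local

/-- If every ideal of a local ring is a direct sum of cyclic modules, then `Spec R`
has at most three elements. -/
theorem spec_card_le_three (R : Type) [CommRing R] [IsLocalRing R]
    (h : ∀ I : Ideal R, I.IsDirectSumOfCyclics) :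
    ∃ P₁ P₂ P₃ : Ideal R, ∀ P : Ideal R, P.IsPrime → P = P₁ ∨ P = P₂ ∨ P = P₃ := by
  obtain ⟨ι, x, hind, hsup⟩ := h (IsLocalRing.maximalIdeal R)
  by_cases h1 : ∃ P : Ideal R, P.IsPrime ∧ P ≠ IsLocalRing.maximalIdeal R
  · obtain ⟨P₀, hP₀, hP₀M⟩ := h1
    by_cases h2 : ∃ Q : Ideal R, Q.IsPrime ∧ Q ≠ IsLocalRing.maximalIdeal R ∧ Q ≠ P₀
    · obtain ⟨Q₀, hQ₀, hQ₀M, hQ₀P⟩ := h2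
      refine ⟨P₀, Q₀, IsLocalRing.maximalIdeal R, fun L hL => ?_⟩
      by_cases hLP : L = P₀
      · exact Or.inl hLP
      by_cases hLQ : L = Q₀
      · exact Or.inr (Or.inl hLQ)
      by_cases hLM : L = IsLocalRing.maximalIdeal R
      · exact Or.inr (Or.inr hLM)
      exfalso
      obtain ⟨iP, hiP, hiPall⟩ := exists_good_index hind hsup hP₀ hP₀M
      obtain ⟨iQ, hiQ, hiQall⟩ := exists_good_index hind hsup hQ₀ hQ₀M
      obtain ⟨iL, hiL, hiLall⟩ := exists_good_index hind hsup hL hLM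
      have hPQi : iP ≠ iQ := by
        intro he
        subst he
        exact hQ₀P (le_antisymm
          (same_index_le h hsup hQ₀ hP₀ hiQ hiP hiQall hiPall)
          (same_index_le h hsup hP₀ hQ₀ hiP hiQ hiPall hiQall))
      have hPLi : iP ≠ iL := by
        intro he
        subst he
        exact hLP (le_antisymm
          (same_index_le h hsup hL hP₀ hiL hiP hiLall hiPall)
          (same_index_le h hsup hP₀ hL hiP hiL hiPall hiLall))
      have hQLi : iQ ≠ iL := by
        intro he
        subst he
        exact hLQ (le_antisymm
          (same_index_le h hsup hL hQ₀ hiL hiQ hiLall hiQall)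
          (same_index_le h hsup hQ₀ hL hiQ hiL hiQall hiLall))
      exact no_three h hind hsup hP₀ hQ₀ hL hPQi hPLi hQLi hiP hiQ hiL
    · push_neg at h2
      refine ⟨P₀, IsLocalRing.maximalIdeal R, IsLocalRing.maximalIdeal R, fun L hL => ?_⟩
      by_cases hLM : L = IsLocalRing.maximalIdeal R
      · exact Or.inr (Or.inl hLM)
      · exact Or.inl (h2 L hL hLM)
  · push_neg at h1
    exact ⟨IsLocalRing.maximalIdeal R, IsLocalRing.maximalIdeal R, IsLocalRing.maximalIdeal R,
      fun L hL => Or.inl (h1 L hL)⟩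
end

section
/- Let (R, M) be a commutative local ring such that every ideal of R is a direct sum of cyclic R-modules. If the maximal ideal M = Rz is principal with z not nilpotent, then R is a principal ideal domain and Spec(R) = {(0), M}. -/
/-- Annihilator of `z` is contained in every `(z^n)`. -/
lemma ann_mem_span_pow {R : Type} [CommRing R] [IsLocalRing R] {z : R}
    (hz : IsLocalRing.maximalIdeal R = Ideal.span ({z} : Set R))
    (hnil : ¬ IsNilpotent z) (a : R) (ha : a * z = 0) (n : ℕ) :
    a ∈ Ideal.span ({z ^ n} : Set R) := by
  induction n with
  | zero => simp
  | succ n ih =>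
    obtain ⟨c, hc⟩ := Ideal.mem_span_singleton.mp ih
    have hcz : z ^ (n + 1) * c = 0 := by
      have : a * z = z ^ n * c * z := by rw [hc]
      rw [ha] at this
      calc z ^ (n + 1) * c = z ^ n * c * z := by ring
        _ = 0 := this.symm
    have hcu : ¬ IsUnit c := by
      intro hu
      apply hnil
      exact ⟨n + 1, by
        obtain ⟨u, rfl⟩ := hu
        have := congrArg (fun t => t * (↑u⁻¹ : R)) hcz
        simpa using this⟩
    have hcM : c ∈ Ideal.span ({z} : Set R) := hz ▸ hcu
    obtain ⟨d, rfl⟩ := Ideal.mem_span_singleton.mp hcM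
    exact Ideal.mem_span_singleton.mpr ⟨d, by rw [hc]; ring⟩

/-- If every ideal of a local ring `R` is a direct sum of cyclic modules, and the maximal
ideal is `Rz` with `z` not nilpotent, then `R` is a PID and `Spec R = {0, M}`. -/
theorem pid_of_maximalIdeal_principal_not_nilpotent (R : Type) [CommRing R] [IsLocalRing R]
    (h : ∀ I : Ideal R, I.IsDirectSumOfCyclics) (z : R)
    (hz : IsLocalRing.maximalIdeal R = Ideal.span ({z} : Set R))
    (hnil : ¬ IsNilpotent z) :
    IsPrincipalIdealRing R ∧ IsDomain R ∧
      (∀ P : Ideal R, P.IsPrime ↔ (P = ⊥ ∨ P = IsLocalRing.maximalIdeal R)) := by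
  classical
  -- The intersection of all powers of the maximal ideal
  set J : Ideal R := ⨅ n : ℕ, Ideal.span ({z ^ n} : Set R) with hJdef
  have memJ : ∀ a : R, a ∈ J ↔ ∀ n : ℕ, a ∈ Ideal.span ({z ^ n} : Set R) := by
    intro a; simp [hJdef, Ideal.mem_iInf]
  have hannJ : ∀ a : R, a * z = 0 → a ∈ J := fun a ha =>
    (memJ a).mpr (fun n => ann_mem_span_pow hz hnil a ha n)
  -- J = zJ
  have hJz : ∀ a ∈ J, ∃ c ∈ J, a = z * c := by
    intro a haJ
    have h1 : a ∈ Ideal.span ({z ^ 1} : Set R) := (memJ a).mp haJ 1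
    obtain ⟨c, hc⟩ := Ideal.mem_span_singleton.mp h1
    rw [pow_one] at hc
    refine ⟨c, (memJ c).mpr ?_, hc⟩
    intro n
    obtain ⟨e, he⟩ := Ideal.mem_span_singleton.mp ((memJ a).mp haJ (n + 1))
    have hce : (c - z ^ n * e) * z = 0 := by
      have : z * c = z ^ (n + 1) * e := by rw [← hc, ← he]
      calc (c - z ^ n * e) * z = z * c - z ^ (n + 1) * e := by ring
        _ = 0 := by rw [this]; ring
    have hmem := (memJ _).mp (hannJ _ hce) n
    have : c = (c - z ^ n * e) + z ^ n * e := by ring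
    rw [this]
    exact Ideal.add_mem _ hmem (Ideal.mem_span_singleton.mpr ⟨e, rfl⟩)
  -- J = 0 via the direct sum of cyclics hypothesis
  have hJbot : J = ⊥ := by
    obtain ⟨ι, x, hind, hsup⟩ := h J
    set N : ι → Submodule R R := fun i => Submodule.span R ({x i} : Set R) with hNdef
    have hx0 : ∀ i, x i = 0 := by
      intro i
      have hxJ : x i ∈ J := by
        rw [← hsup]
        exact le_iSup N i (Submodule.mem_span_singleton_self _)
      obtain ⟨c, hcJ, hxc⟩ := hJz _ hxJ
      have hcsup : c ∈ ⨆ j, N j := by rw [hsup]; exact hcJ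
      have hsplit : (⨆ j, N j) = N i ⊔ ⨆ j, ⨆ _ : j ≠ i, N j := by
        apply le_antisymm
        · apply iSup_le
          intro j
          by_cases hji : j = i
          · subst hji; exact le_sup_left
          · exact le_sup_of_le_right (le_iSup_of_le j (le_iSup_of_le hji le_rfl))
        · exact sup_le (le_iSup N i) (iSup_le fun j => iSup_le fun _ => le_iSup N j)
      rw [hsplit] at hcsup
      obtain ⟨ci, hci, c', hc', hcc⟩ := Submodule.mem_sup.mp hcsup
      have hkey : x i - z * ci ∈ N i ⊓ (⨆ j, ⨆ _ : j ≠ i, N j) := by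
        constructor
        · exact Submodule.sub_mem _ (Submodule.mem_span_singleton_self _)
            (Ideal.mul_mem_left _ z hci)
        · have : x i - z * ci = z * c' := by
            rw [hxc, ← hcc]; ring
          rw [this]
          exact Submodule.smul_mem _ z hc'
      have hdisj := hind i
      have hzero : x i - z * ci = 0 := by
        have := Submodule.disjoint_def.mp hdisj _ hkey.1 hkey.2
        exact this
      have hxi : x i = z * ci := by linear_combination hzero
      obtain ⟨r, hr⟩ := Ideal.mem_span_singleton.mp hci
      have hfix : x i = z * (x i * r) := by rw [← hr]; exact hxi
      have hfin : (1 - z * r) * x i = 0 := by linear_combination hfix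
      have hzrM : z * r ∈ IsLocalRing.maximalIdeal R := by
        rw [hz]
        exact Ideal.mul_mem_right r _ (Ideal.subset_span rfl)
      have hu : IsUnit (1 - z * r) :=
        IsLocalRing.isUnit_one_sub_self_of_mem_nonunits _ hzrM
      obtain ⟨u, hu⟩ := hu
      have := congrArg (fun t => (↑u⁻¹ : R) * t) hfin
      simp only [← hu, mul_zero] at this
      rwa [← mul_assoc, Units.inv_mul, one_mul] at this
    rw [← hsup]
    apply le_antisymm _ bot_le
    apply iSup_le
    intro i
    simp [hNdef, hx0 i]
  -- annihilator of z is zero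
  have hann : ∀ a : R, a * z = 0 → a = 0 := by
    intro a ha
    have := hannJ a ha
    rw [hJbot] at this
    exact this
  have hzne : z ≠ 0 := fun hh => hnil (hh ▸ IsNilpotent.zero)
  haveI : Nontrivial R := ⟨⟨z, 0, hzne⟩⟩
  -- every nonzero element is a unit times a power of z
  have hfact : ∀ a : R, a ≠ 0 → ∃ (n : ℕ) (c : R), IsUnit c ∧ a = c * z ^ n ∧
      a ∉ Ideal.span ({z ^ (n + 1)} : Set R) := by
    intro a ha
    have hex : ∃ m : ℕ, a ∉ Ideal.span ({z ^ m} : Set R) := by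
      by_contra hcon
      push_neg at hcon
      have : a ∈ J := (memJ a).mpr hcon
      rw [hJbot] at this
      exact ha this
    set m := Nat.find hex with hm
    have hspec : a ∉ Ideal.span ({z ^ m} : Set R) := Nat.find_spec hex
    have hmpos : m ≠ 0 := by
      intro h0
      apply hspec
      rw [h0, pow_zero, Ideal.span_singleton_one]
      trivial
    obtain ⟨k, hk⟩ := Nat.exists_eq_succ_of_ne_zero hmpos
    rw [Nat.succ_eq_add_one] at hk
    have hk1 : a ∈ Ideal.span ({z ^ k} : Set R) := by
      have hlt : k < Nat.find hex := by omega
      exact not_not.mp (Nat.find_min hex hlt)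
    obtain ⟨c, hc⟩ := Ideal.mem_span_singleton.mp hk1
    have hcu : IsUnit c := by
      by_contra hcu
      have hcM : c ∈ Ideal.span ({z} : Set R) := hz ▸ hcu
      obtain ⟨d, rfl⟩ := Ideal.mem_span_singleton.mp hcM
      apply hspec
      rw [hk]
      exact Ideal.mem_span_singleton.mpr ⟨d, by rw [hc]; ring⟩
    refine ⟨k, c, hcu, by rw [hc]; ring, by rwa [← hk]⟩
  -- no zero divisors
  haveI : NoZeroDivisors R := by
    constructor
    intro a b hab
    by_contra hcon
    push_neg at hcon
    obtain ⟨ha, hb⟩ := hcon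
    obtain ⟨n, c, hcu, hac, -⟩ := hfact a ha
    obtain ⟨m, d, hdu, hbd, -⟩ := hfact b hb
    apply hnil
    refine ⟨n + m, ?_⟩
    have : c * d * z ^ (n + m) = 0 := by
      rw [show c * d * z ^ (n + m) = (c * z ^ n) * (d * z ^ m) by ring, ← hac, ← hbd, hab]
    obtain ⟨u, rfl⟩ := hcu
    obtain ⟨v, rfl⟩ := hdu
    have h2 := congrArg (fun t => (↑u⁻¹ : R) * ((↑v⁻¹ : R) * t)) this
    simpa [mul_assoc, mul_left_comm] using h2
  haveI hdom : IsDomain R := NoZeroDivisors.to_isDomain R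
  -- PID
  have hpid : IsPrincipalIdealRing R := by
    constructor
    intro I
    by_cases hI : I = ⊥
    · exact ⟨0, by rw [hI]; exact (Submodule.span_zero_singleton R).symm⟩
    · obtain ⟨a, haI, ha⟩ := Submodule.exists_mem_ne_zero_of_ne_bot hI
      have hex : ∃ n : ℕ, ∃ b ∈ I, b ∉ Ideal.span ({z ^ (n + 1)} : Set R) := by
        obtain ⟨n, c, hcu, hac, hnotin⟩ := hfact a ha
        exact ⟨n, a, haI, hnotin⟩
      set n₀ := Nat.find hex with hn₀
      obtain ⟨b, hbI, hbnot⟩ := Nat.find_spec hex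
      have hIle : I ≤ Ideal.span ({z ^ n₀} : Set R) := by
        intro y hy
        rcases Nat.eq_zero_or_pos n₀ with h0 | hpos
        · rw [h0, pow_zero, Ideal.span_singleton_one]; trivial
        · have := Nat.find_min hex (show n₀ - 1 < n₀ by omega)
          push_neg at this
          have := this y hy
          rwa [show n₀ - 1 + 1 = n₀ by omega] at this
      obtain ⟨c, hc⟩ := Ideal.mem_span_singleton.mp (hIle hbI)
      have hcu : IsUnit c := by
        by_contra hcu
        have hcM : c ∈ Ideal.span ({z} : Set R) := hz ▸ hcu
        obtain ⟨d, rfl⟩ := Ideal.mem_span_singleton.mp hcM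
        exact hbnot (Ideal.mem_span_singleton.mpr ⟨d, by rw [hc]; ring⟩)
      refine ⟨⟨z ^ n₀, le_antisymm hIle ?_⟩⟩
      rw [Submodule.span_le]
      intro t ht
      rw [Set.mem_singleton_iff] at ht
      subst ht
      obtain ⟨u, rfl⟩ := hcu
      have : z ^ n₀ = ↑u⁻¹ * b := by
        rw [hc]
        rw [mul_comm (z ^ n₀), ← mul_assoc, Units.inv_mul, one_mul]
      rw [this]
      exact Ideal.mul_mem_left _ _ hbI
  refine ⟨hpid, hdom, ?_⟩
  intro P
  constructor
  · intro hP
    by_cases hPb : P = ⊥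
    · left; exact hPb
    · right
      obtain ⟨b, hb⟩ := (hpid.principal P).principal
      have hbne : b ≠ 0 := by
        intro h0
        apply hPb
        rw [hb, h0]
        exact Submodule.span_zero_singleton R
      obtain ⟨n, c, hcu, hbc, -⟩ := hfact b hbne
      have hn0 : n ≠ 0 := by
        intro h0
        apply hP.ne_top
        rw [hb]
        rw [h0, pow_zero, mul_one] at hbc
        subst hbc
        exact Ideal.span_singleton_eq_top.mpr hcu
      have hznP : z ^ n ∈ P := by
        have hbP : b ∈ P := by rw [hb]; exact Ideal.subset_span rfl
        obtain ⟨u, rfl⟩ := hcu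
        have : z ^ n = ↑u⁻¹ * b := by rw [hbc, ← mul_assoc, Units.inv_mul, one_mul]
        rw [this]
        exact Ideal.mul_mem_left _ _ hbP
      have hzP : z ∈ P := hP.mem_of_pow_mem n hznP
      apply le_antisymm
      · exact IsLocalRing.le_maximalIdeal hP.ne_top
      · rw [hz, Ideal.span_le]
        intro t ht
        rw [Set.mem_singleton_iff] at ht
        subst ht
        exact hzP
  · rintro (rfl | rfl)
    · exact Ideal.bot_prime
    · exact (IsLocalRing.maximalIdeal.isMaximal R).isPrime
end

section
/- Let (R, M) be a commutative local ring such that every ideal of R is a direct sum of cyclic R-modules. Then the maximal ideal M is principal if and only if R is a principal ideal ring. -/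
open Classical in
/-- A sequence of coherent "divisions by m" of a pair. -/
private noncomputable def chainSeq {R : Type} [CommRing R] (m : R) : ℕ → R × R → R × R
  | 0, p => p
  | k+1, p =>
    if h : ∃ r : R × R, (chainSeq m k p).1 = r.1 * m ∧ (chainSeq m k p).2 = r.2 * m
    then h.choose else chainSeq m k p

/-- The ideal of elements coherently infinitely divisible by `m`. -/
private def divSeqIdeal (R : Type) [CommRing R] (m : R) : Ideal R where
  carrier := {z | ∃ c : ℕ → R, c 0 = z ∧ ∀ k, c k = m * c (k + 1)}
  zero_mem' := ⟨fun _ => 0, rfl, fun _ => by simp⟩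
  add_mem' := by
    rintro a b ⟨c, hc0, hc⟩ ⟨d, hd0, hd⟩
    refine ⟨fun k => c k + d k, ?_, fun k => ?_⟩
    · show c 0 + d 0 = a + b
      rw [hc0, hd0]
    · show c k + d k = m * (c (k + 1) + d (k + 1))
      rw [hc k, hd k]; ring
  smul_mem' := by
    rintro r a ⟨c, hc0, hc⟩
    refine ⟨fun k => r * c k, ?_, fun k => ?_⟩
    · show r * c 0 = r • a
      rw [hc0, smul_eq_mul]
    · show r * c k = m * (r * c (k + 1))
      rw [hc k]; ring

private lemma divSeqIdeal_eq_bot {R : Type} [CommRing R] [IsLocalRing R]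
    (h : ∀ I : Ideal R, I.IsDirectSumOfCyclics) (m : R)
    (hm : IsLocalRing.maximalIdeal R = Submodule.span R {m}) :
    divSeqIdeal R m = ⊥ := by
  obtain ⟨ι, z, hind, hsup⟩ := h (divSeqIdeal R m)
  have hz0 : ∀ t, z t = 0 := by
    intro t
    have hzS : z t ∈ divSeqIdeal R m := by
      have : z t ∈ (⨆ i, Submodule.span R ({z i} : Set R)) :=
        le_iSup (fun i => Submodule.span R ({z i} : Set R)) t
          (Submodule.mem_span_singleton_self _)
      rwa [hsup] at this
    obtain ⟨c, hc0, hc⟩ := hzS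
    have hc1 : c 1 ∈ divSeqIdeal R m := ⟨fun k => c (k + 1), rfl, fun k => hc (k + 1)⟩
    have hmem : z t ∈ ⨆ u, Submodule.span R ({m * z u} : Set R) := by
      have h1 : z t = m • c 1 := by rw [smul_eq_mul, ← hc 0, hc0]
      have h2 : m • c 1 ∈ Submodule.map (LinearMap.lsmul R R m) (divSeqIdeal R m) :=
        Submodule.mem_map_of_mem hc1
      rw [← hsup, Submodule.map_iSup] at h2
      have h3 : ∀ u, Submodule.map (LinearMap.lsmul R R m) (Submodule.span R ({z u} : Set R))
          = Submodule.span R ({m * z u} : Set R) := by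
        intro u
        rw [Submodule.map_span, Set.image_singleton]
        norm_num [LinearMap.lsmul_apply]
      simp only [h3] at h2
      rw [h1]; exact h2
    have hle : (⨆ u, Submodule.span R ({m * z u} : Set R)) ≤
        Submodule.span R ({m * z t} : Set R) ⊔
          ⨆ u, ⨆ _ : u ≠ t, Submodule.span R ({z u} : Set R) := by
      apply iSup_le
      intro u
      by_cases hu : u = t
      · subst hu; exact le_sup_left
      · refine le_sup_of_le_right (le_iSup_of_le u (le_iSup_of_le hu ?_))
        rw [Submodule.span_le, Set.singleton_subset_iff]
        exact Submodule.mem_span_singleton.mpr ⟨m, smul_eq_mul _ _⟩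
    obtain ⟨p, hp, q, hq, hpq⟩ := Submodule.mem_sup.mp (hle hmem)
    obtain ⟨r, hr⟩ := Submodule.mem_span_singleton.mp hp
    have hqz : q = (1 - r * m) * z t := by
      have : q = z t - p := by rw [← hpq]; ring
      rw [this, ← hr, smul_eq_mul]; ring
    have hq0 : q = 0 := by
      refine Submodule.disjoint_def.mp (hind t) q ?_ hq
      rw [hqz]
      exact Submodule.mem_span_singleton.mpr ⟨1 - r * m, smul_eq_mul _ _⟩
    have hu : IsUnit (1 - r * m) := by
      apply IsLocalRing.isUnit_one_sub_self_of_mem_nonunits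
      have : r * m ∈ IsLocalRing.maximalIdeal R := by
        rw [hm]
        exact Submodule.mem_span_singleton.mpr ⟨r, smul_eq_mul _ _⟩
      rwa [IsLocalRing.mem_maximalIdeal] at this
    have hzero : (1 - r * m) * z t = 0 := by rw [← hqz, hq0]
    exact (hu.mul_right_eq_zero).mp hzero
  rw [← hsup]
  apply le_antisymm _ bot_le
  apply iSup_le
  intro t
  rw [hz0 t]
  simp

private lemma no_indep_pair {R : Type} [CommRing R] [IsLocalRing R]
    (h : ∀ I : Ideal R, I.IsDirectSumOfCyclics) {m x y : R}
    (hm : IsLocalRing.maximalIdeal R = Submodule.span R {m})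
    (hx : x ≠ 0) (hy : y ≠ 0)
    (hxy : Submodule.span R ({x} : Set R) ⊓ Submodule.span R ({y} : Set R) = ⊥) : False := by
  -- step lemma: any representations x = a m^k, y = b m^k can be divided further
  have step : ∀ (a b : R) (k : ℕ), x = a * m ^ k → y = b * m ^ k →
      ∃ q : R × R, a = q.1 * m ∧ b = q.2 * m := by
    intro a b k hxa hyb
    have ha : a ∈ IsLocalRing.maximalIdeal R := by
      by_contra hA
      rw [IsLocalRing.mem_maximalIdeal, mem_nonunits_iff, not_not] at hA
      obtain ⟨u, rfl⟩ := hA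
      have hyx : y ∈ Submodule.span R ({x} : Set R) := by
        refine Submodule.mem_span_singleton.mpr ⟨b * ↑u⁻¹, ?_⟩
        rw [smul_eq_mul, hxa, hyb]
        calc b * ↑u⁻¹ * (↑u * m ^ k) = b * ((↑u⁻¹ * ↑u) * m ^ k) := by ring
        _ = b * m ^ k := by rw [Units.inv_mul, one_mul]
      have : y ∈ Submodule.span R ({x} : Set R) ⊓ Submodule.span R ({y} : Set R) :=
        ⟨hyx, Submodule.mem_span_singleton_self y⟩
      rw [hxy] at this
      exact hy (by simpa using this)
    have hb : b ∈ IsLocalRing.maximalIdeal R := by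
      by_contra hB
      rw [IsLocalRing.mem_maximalIdeal, mem_nonunits_iff, not_not] at hB
      obtain ⟨u, rfl⟩ := hB
      have hxin : x ∈ Submodule.span R ({y} : Set R) := by
        refine Submodule.mem_span_singleton.mpr ⟨a * ↑u⁻¹, ?_⟩
        rw [smul_eq_mul, hxa, hyb]
        calc a * ↑u⁻¹ * (↑u * m ^ k) = a * ((↑u⁻¹ * ↑u) * m ^ k) := by ring
        _ = a * m ^ k := by rw [Units.inv_mul, one_mul]
      have : x ∈ Submodule.span R ({x} : Set R) ⊓ Submodule.span R ({y} : Set R) :=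
        ⟨Submodule.mem_span_singleton_self x, hxin⟩
      rw [hxy] at this
      exact hx (by simpa using this)
    rw [hm] at ha hb
    obtain ⟨a', ha'⟩ := Submodule.mem_span_singleton.mp ha
    obtain ⟨b', hb'⟩ := Submodule.mem_span_singleton.mp hb
    exact ⟨(a', b'), by rw [← ha']; exact (smul_eq_mul _ _).symm,
      by rw [← hb']; exact (smul_eq_mul _ _).symm⟩
  -- the invariant along the chain
  have inv : ∀ k : ℕ, x = (chainSeq m k (x, y)).1 * m ^ k ∧
      y = (chainSeq m k (x, y)).2 * m ^ k := by
    intro k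
    induction k with
    | zero => simp [chainSeq]
    | succ k ih =>
      obtain ⟨h1, h2⟩ := ih
      obtain ⟨qq, hq1, hq2⟩ := step _ _ k h1 h2
      have hex : ∃ r : R × R, (chainSeq m k (x, y)).1 = r.1 * m ∧
          (chainSeq m k (x, y)).2 = r.2 * m := ⟨qq, hq1, hq2⟩
      have hck : chainSeq m (k + 1) (x, y) = hex.choose := by
        rw [chainSeq, dif_pos hex]
      obtain ⟨hc1, hc2⟩ := hex.choose_spec
      rw [hc1] at h1
      rw [hc2] at h2
      constructor
      · rw [hck]; linear_combination h1
      · rw [hck]; linear_combination h2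
  have chain : ∀ k : ℕ, (chainSeq m k (x, y)).1 = m * (chainSeq m (k + 1) (x, y)).1 := by
    intro k
    obtain ⟨h1, h2⟩ := inv k
    obtain ⟨qq, hq1, hq2⟩ := step _ _ k h1 h2
    have hex : ∃ r : R × R, (chainSeq m k (x, y)).1 = r.1 * m ∧
        (chainSeq m k (x, y)).2 = r.2 * m := ⟨qq, hq1, hq2⟩
    have hck : chainSeq m (k + 1) (x, y) = hex.choose := by
      rw [chainSeq, dif_pos hex]
    rw [hck]
    linear_combination hex.choose_spec.1

  have hxS : x ∈ divSeqIdeal R m := by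
    refine ⟨fun k => (chainSeq m k (x, y)).1, ?_, chain⟩
    simp [chainSeq]
  rw [divSeqIdeal_eq_bot h m hm] at hxS
  exact hx (by simpa using hxS)

/-- If every ideal of a local ring is a direct sum of cyclic modules, then the maximal ideal
is principal iff `R` is a principal ideal ring. -/
theorem maximalIdeal_principal_iff_pir (R : Type) [CommRing R] [IsLocalRing R]
    (h : ∀ I : Ideal R, I.IsDirectSumOfCyclics) :
    (IsLocalRing.maximalIdeal R).IsPrincipal ↔ IsPrincipalIdealRing R := by
  constructor
  · intro hM
    obtain ⟨m, hm⟩ := hM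
    constructor
    intro I
    obtain ⟨ι, z, hind, hsup⟩ := h I
    by_cases hz : ∀ t, z t = 0
    · refine ⟨0, ?_⟩
      rw [← hsup]
      apply le_antisymm
      · apply iSup_le; intro t; rw [hz t]
      · rw [Submodule.span_zero_singleton]; exact bot_le
    · push_neg at hz
      obtain ⟨t₀, ht₀⟩ := hz
      have hzero : ∀ u, u ≠ t₀ → z u = 0 := by
        intro u hu
        by_contra hzu
        have h2 : Submodule.span R ({z u} : Set R) ≤
            ⨆ v, ⨆ _ : v ≠ t₀, Submodule.span R ({z v} : Set R) :=
          le_iSup_of_le u (le_iSup_of_le hu le_rfl)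
        have hdisj : Submodule.span R ({z t₀} : Set R) ⊓
            Submodule.span R ({z u} : Set R) = ⊥ :=
          disjoint_iff.mp ((hind t₀).mono_right h2)
        exact no_indep_pair h hm ht₀ hzu hdisj
      refine ⟨z t₀, ?_⟩
      rw [← hsup]
      apply le_antisymm
      · apply iSup_le
        intro u
        by_cases hu : u = t₀
        · subst hu; exact le_rfl
        · rw [hzero u hu, Submodule.span_zero_singleton]; exact bot_le
      · exact le_iSup (fun i => Submodule.span R ({z i} : Set R)) t₀
  · intro hpir
    exact IsPrincipalIdealRing.principal _
end

section
/- Let (R, M) be a commutative local ring such that every ideal of R is a direct sum of cyclic R-modules. Then M is finitely generated if and only if R is Noetherian. -/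
open IsLocalRing

/-- Nakayama-style lemma: an ideal of a local ring which is a direct sum of cyclics and is
contained in `M • I` is zero. -/
lemma ds_eq_bot_of_le_smul {R : Type} [CommRing R] [IsLocalRing R]
    {ι : Type} {x : ι → R}
    (hind : iSupIndep (fun i => Submodule.span R ({x i} : Set R)))
    {I : Ideal R} (hsup : (⨆ i, Submodule.span R ({x i} : Set R)) = I)
    (hle : I ≤ maximalIdeal R • I) : I = ⊥ := by
  set P : ι → Ideal R := fun i => Submodule.span R ({x i} : Set R) with hP
  have hx0 : ∀ i, x i = 0 := by
    intro i
    have hxI : x i ∈ I := hsup ▸ (le_iSup P i) (Submodule.mem_span_singleton_self _)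
    have hxMI : x i ∈ maximalIdeal R • I := hle hxI
    have hrw : maximalIdeal R • I = ⨆ j, maximalIdeal R • P j := by
      rw [← hsup, Submodule.smul_iSup]
    have hkey : (⨆ j, maximalIdeal R • P j) ≤
        (maximalIdeal R • P i) ⊔ (⨆ j, ⨆ _ : j ≠ i, P j) := by
      refine iSup_le fun j => ?_
      rcases eq_or_ne j i with rfl | hji
      · exact le_sup_left
      · exact le_trans Submodule.smul_le_right
          (le_trans (le_iSup₂ (f := fun j (_ : j ≠ i) => P j) j hji) le_sup_right)
    have hxmem : x i ∈ (maximalIdeal R • P i) ⊔ (⨆ j, ⨆ _ : j ≠ i, P j) := by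
      exact hkey (hrw ▸ hxMI)
    obtain ⟨a, ha, b, hb, hab⟩ := Submodule.mem_sup.mp hxmem
    have hsub : x i - a ∈ P i :=
      sub_mem (Submodule.mem_span_singleton_self _) (Submodule.smul_le_right ha)
    have hsub' : x i - a ∈ ⨆ j, ⨆ _ : j ≠ i, P j := by
      have : x i - a = b := by rw [← hab]; ring
      rw [this]; exact hb
    have hzero : x i - a = 0 := by
      have := (hind i).le_bot (Submodule.mem_inf.mpr ⟨hsub, hsub'⟩)
      simpa using this
    have hxa : x i = a := by linear_combination hzero
    obtain ⟨m, hm, hma⟩ := Submodule.mem_smul_span_singleton.mp (hxa ▸ ha)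
    have hunit : IsUnit (1 - m) :=
      IsLocalRing.isUnit_one_sub_self_of_mem_nonunits m ((mem_maximalIdeal m).mp hm)
    have hz : (1 - m) * x i = 0 := by
      rw [smul_eq_mul] at hma
      rw [sub_mul, one_mul, hma, sub_self]
    exact (IsUnit.mul_right_eq_zero hunit).mp hz
  rw [← hsup]
  exact iSup_eq_bot.mpr fun i => by rw [hP]; simp [hx0 i]

/-- Core lemma: if every ideal is a direct sum of cyclics and `y ∈ M` satisfies
`M * y ⊆ (y²)`, then every ideal contained in `(y)` is finitely generated (indeed a power). -/
lemma fg_of_le_span_singleton {R : Type} [CommRing R] [IsLocalRing R]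
    (h : ∀ I : Ideal R, I.IsDirectSumOfCyclics) (y : R) (hy : y ∈ maximalIdeal R)
    (h2 : ∀ m ∈ maximalIdeal R, m * y ∈ Ideal.span ({y * y} : Set R)) :
    ∀ N : Ideal R, N ≤ Ideal.span {y} → N.FG := by
  classical
  -- the "order" lemma
  have ord : ∀ (k : ℕ) (a : R), 1 ≤ k → a ∈ Ideal.span ({y ^ k} : Set R) →
      a ∉ Ideal.span ({y ^ (k + 1)} : Set R) →
      Ideal.span ({a} : Set R) = Ideal.span ({y ^ k} : Set R) := by
    intro k a hk hmem hnmem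
    obtain ⟨r, hr⟩ := Ideal.mem_span_singleton'.mp hmem
    have hru : IsUnit r := by
      by_contra hr'
      obtain ⟨c, hc⟩ := Ideal.mem_span_singleton'.mp (h2 r ((mem_maximalIdeal r).mpr hr'))
      apply hnmem
      refine Ideal.mem_span_singleton'.mpr ⟨c, ?_⟩
      obtain ⟨p, rfl⟩ : ∃ p, k = p + 1 := ⟨k - 1, by omega⟩
      calc c * y ^ (p + 1 + 1) = (c * (y * y)) * y ^ p := by ring
        _ = (r * y) * y ^ p := by rw [hc]
        _ = r * y ^ (p + 1) := by ring
        _ = a := hr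
    apply le_antisymm
    · rw [Ideal.span_singleton_le_span_singleton]
      exact ⟨r, by rw [← hr]; ring⟩
    · rw [Ideal.span_singleton_le_span_singleton]
      refine ⟨(hru.unit⁻¹ : Rˣ).1, ?_⟩
      have hu : (hru.unit : R) = r := hru.unit_spec
      calc y ^ k = (↑hru.unit * ↑hru.unit⁻¹) * y ^ k := by rw [Units.mul_inv, one_mul]
        _ = a * (hru.unit⁻¹ : Rˣ).1 := by rw [hu, ← hr]; ring
  -- the "infinite radical" T
  set T : Ideal R := ⨅ n : ℕ, Ideal.span ({y ^ (n + 1)} : Set R) with hT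
  have hTbot : T = ⊥ := by
    have hTle : T ≤ maximalIdeal R • T := by
      intro t ht
      by_cases ht0 : t = 0
      · rw [ht0]; exact zero_mem _
      have ht2 : t ∈ Ideal.span ({y ^ 2} : Set R) := by
        have := (Submodule.mem_iInf _).mp ht 1
        simpa using this
      obtain ⟨z, hz⟩ := Ideal.mem_span_singleton'.mp ht2
      set w := z * y with hw
      have htyw : t = y * w := by rw [hw, ← hz]; ring
      by_cases hwT : w ∈ T
      · exact htyw ▸ Submodule.smul_mem_smul hy hwT
      · exfalso
        have hex : ∃ n, w ∉ Ideal.span ({y ^ (n + 1)} : Set R) := by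
          by_contra hc
          push_neg at hc
          exact hwT ((Submodule.mem_iInf _).mpr hc)
        set k := Nat.find hex with hkdef
        have hwk1 : w ∉ Ideal.span ({y ^ (k + 1)} : Set R) := Nat.find_spec hex
        have hk1 : 1 ≤ k := by
          rcases Nat.eq_zero_or_pos k with h0 | hpos
          · exfalso
            apply hwk1
            rw [h0]
            simpa using Ideal.mem_span_singleton'.mpr ⟨z, rfl⟩
          · exact hpos
        have hwk : w ∈ Ideal.span ({y ^ k} : Set R) := by
          have := Nat.find_min hex (m := k - 1) (by omega)
          rw [not_not] at this
          have hkk : k - 1 + 1 = k := by omega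
          rwa [hkk] at this
        have hspanw := ord k w hk1 hwk hwk1
        -- y^k ∈ span {w}
        have hykw : y ^ k ∈ Ideal.span ({w} : Set R) := by
          rw [hspanw]; exact Ideal.mem_span_singleton_self _
        obtain ⟨c, hc⟩ := Ideal.mem_span_singleton'.mp hykw
        have hyk1 : y ^ (k + 1) ∈ Ideal.span ({t} : Set R) := by
          refine Ideal.mem_span_singleton'.mpr ⟨c, ?_⟩
          rw [htyw]
          calc c * (y * w) = (c * w) * y := by ring
            _ = y ^ k * y := by rw [hc]
            _ = y ^ (k + 1) := by ring
        have hNle : Ideal.span ({y ^ (k + 1)} : Set R) ≤ Ideal.span ({t} : Set R) := by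
          rw [Ideal.span_le, Set.singleton_subset_iff]; exact hyk1
        have hTle2 : Ideal.span ({t} : Set R) ≤ Ideal.span ({y ^ (k + 2)} : Set R) := by
          rw [Ideal.span_le, Set.singleton_subset_iff]
          have := (Submodule.mem_iInf _).mp ht (k + 1)
          simpa using this
        have hNak : Ideal.span ({y ^ (k + 1)} : Set R) = ⊥ := by
          apply Submodule.eq_bot_of_le_smul_of_le_jacobson_bot (maximalIdeal R) _
            ⟨{y ^ (k + 1)}, by simp⟩
          · refine le_trans (le_trans hNle hTle2) ?_
            rw [Ideal.span_le, Set.singleton_subset_iff]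
            have : y ^ (k + 2) = y * y ^ (k + 1) := by ring
            rw [this]
            exact Submodule.smul_mem_smul hy (Ideal.mem_span_singleton_self _)
          · exact maximalIdeal_le_jacobson ⊥
        apply ht0
        have htmem : t ∈ Ideal.span ({y ^ (k + 1)} : Set R) := (Submodule.mem_iInf _).mp ht k
        rw [hNak] at htmem
        simpa using htmem
    obtain ⟨ι, x, hind, hsup⟩ := h T
    exact ds_eq_bot_of_le_smul hind hsup hTle
  -- now conclude finite generation
  intro N hN
  by_cases hN0 : N = ⊥
  · rw [hN0]; exact ⟨∅, by simp⟩
  have hex : ∃ n, ¬ N ≤ Ideal.span ({y ^ (n + 1)} : Set R) := by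
    by_contra hc
    push_neg at hc
    exact hN0 (le_bot_iff.mp (hTbot ▸ le_iInf hc))
  set k := Nat.find hex with hkdef
  have hk1spec : ¬ N ≤ Ideal.span ({y ^ (k + 1)} : Set R) := Nat.find_spec hex
  have hk1 : 1 ≤ k := by
    rcases Nat.eq_zero_or_pos k with h0 | hpos
    · exfalso
      apply hk1spec
      rw [h0]
      simpa using hN
    · exact hpos
  have hNk : N ≤ Ideal.span ({y ^ k} : Set R) := by
    have := Nat.find_min hex (m := k - 1) (by omega)
    rw [not_not] at this
    have hkk : k - 1 + 1 = k := by omega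
    rwa [hkk] at this
  obtain ⟨a, haN, hak1⟩ := SetLike.not_le_iff_exists.mp hk1spec
  have hspa := ord k a hk1 (hNk haN) hak1
  refine ⟨{a}, ?_⟩
  rw [Finset.coe_singleton]
  apply le_antisymm
  · rw [Ideal.span_le, Set.singleton_subset_iff]; exact haN
  · rw [hspa]; exact hNk

/-- If every ideal of a local ring is a direct sum of cyclic modules, then the maximal ideal
is finitely generated iff `R` is Noetherian. -/
theorem maximalIdeal_fg_iff_noetherian (R : Type) [CommRing R] [IsLocalRing R]
    (h : ∀ I : Ideal R, I.IsDirectSumOfCyclics) :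
    (IsLocalRing.maximalIdeal R).FG ↔ IsNoetherianRing R := by
  constructor
  · intro hFG
    obtain ⟨ι, y, hind, hsup⟩ := h (maximalIdeal R)
    set P : ι → Ideal R := fun i => Ideal.span {y i} with hP
    have hyM : ∀ i, y i ∈ maximalIdeal R := fun i =>
      hsup ▸ (le_iSup P i) (Ideal.mem_span_singleton_self _)
    -- orthogonality
    have horth : ∀ i j, j ≠ i → y i * y j = 0 := by
      intro i j hij
      have h1 : y i * y j ∈ P j := Ideal.mul_mem_left _ _ (Ideal.mem_span_singleton_self _)
      have h2 : y i * y j ∈ P i := Ideal.mul_mem_right _ _ (Ideal.mem_span_singleton_self _)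
      have h3 : y i * y j ∈ ⨆ k, ⨆ _ : k ≠ i, P k :=
        (le_iSup₂ (f := fun k (_ : k ≠ i) => P k) j hij) h1
      have := (hind i).le_bot (Submodule.mem_inf.mpr ⟨h2, h3⟩)
      simpa using this
    -- multiplication property
    have hmul : ∀ i, ∀ m ∈ maximalIdeal R, m * y i ∈ Ideal.span ({y i * y i} : Set R) := by
      intro i m hm
      set f : R →ₗ[R] R := LinearMap.mulLeft R (y i) with hf
      set Q : Ideal R := Submodule.comap f (Ideal.span ({y i * y i} : Set R)) with hQ
      have hle : maximalIdeal R ≤ Q := by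
        rw [← hsup]
        refine iSup_le fun j => ?_
        rw [Submodule.span_le, Set.singleton_subset_iff]
        show f (y j) ∈ Ideal.span ({y i * y i} : Set R)
        rcases eq_or_ne j i with rfl | hji
        · simpa [hf, LinearMap.mulLeft_apply] using
            Ideal.mem_span_singleton_self (y j * y j)
        · have : f (y j) = 0 := by
            simp only [hf, LinearMap.mulLeft_apply]
            exact horth i j hji
          rw [this]; exact zero_mem _
      have := hle hm
      simpa [hQ, hf, LinearMap.mulLeft_apply, mul_comm] using this
    -- each P i is a Noetherian module
    have hNoeth : ∀ i, IsNoetherian R (P i) := fun i =>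
      isNoetherian_submodule.mpr
        (fun s hs => fg_of_le_span_singleton h (y i) (hyM i) (hmul i) s hs)
    -- finite extraction
    have hcompact := (Submodule.fg_iff_compact _).mp hFG
    obtain ⟨F, hF⟩ := CompleteLattice.IsCompactElement.exists_finset_of_le_iSup (hk := hcompact) (f := P) (h := le_of_eq hsup.symm)
    have hMeq : maximalIdeal R = ⨆ i ∈ F, P i := by
      apply le_antisymm hF
      refine iSup_le fun i => iSup_le fun _ => ?_
      rw [← hsup]
      exact le_iSup P i
    have hNoethM : IsNoetherian R (maximalIdeal R) := by
      rw [hMeq, iSup_subtype']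
      haveI : ∀ i : {i // i ∈ F}, IsNoetherian R (P i.1) := fun i => hNoeth i.1
      exact isNoetherian_iSup
    rw [isNoetherianRing_iff_ideal_fg]
    intro I
    by_cases hI : I = ⊤
    · exact ⟨{1}, by simp [hI, Ideal.span_singleton_one]⟩
    · exact isNoetherian_submodule.mp hNoethM I (le_maximalIdeal hI)
  · intro hN
    exact IsNoetherian.noetherian _
end

section
/- Let (R, M) be a commutative local ring with M = Rx ⊕ L (internal direct sum) for some ideal L and element x ∈ R, and suppose R/Ann(x) is a principal ideal ring. Then every nonzero element of Rx has the form a·xⁿ for some unit a ∈ R and positive integer n. -/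
/-- If `M = Rx ⊕ L` in a local ring and `R/Ann(x)` is a principal ideal ring, then every
nonzero element of `Rx` has the form `a·xⁿ` with `a` a unit and `n ≥ 1`. -/
theorem elements_of_Rx_are_unit_mul_pow (R : Type) [CommRing R] [IsLocalRing R]
    (x : R) (L : Ideal R)
    (hdisj : Disjoint (Submodule.span R ({x} : Set R)) L)
    (hsum : Submodule.span R ({x} : Set R) ⊔ L = IsLocalRing.maximalIdeal R)
    (hpir : IsPrincipalIdealRing (R ⧸ Ideal.torsionOf R R x)) :
    ∀ m ∈ Submodule.span R ({x} : Set R), m ≠ 0 →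
      ∃ (a : R) (n : ℕ), IsUnit a ∧ 0 < n ∧ m = a * x ^ n := by
  classical
  intro m hm hm0
  have hx0 : x ≠ 0 := by
    rintro rfl
    rw [Submodule.span_zero_singleton] at hm
    exact hm0 hm
  set I := Ideal.torsionOf R R x with hIdef
  have hmemI : ∀ r : R, r ∈ I ↔ r * x = 0 := fun r => by
    rw [hIdef, Ideal.mem_torsionOf_iff, smul_eq_mul]
  have hInetop : I ≠ ⊤ := by
    intro h
    have h1 : (1 : R) ∈ I := h ▸ Submodule.mem_top
    rw [hmemI, one_mul] at h1
    exact hx0 h1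
  have hIleM : I ≤ IsLocalRing.maximalIdeal R := IsLocalRing.le_maximalIdeal hInetop
  haveI : Nontrivial (R ⧸ I) := Ideal.Quotient.nontrivial_iff.mpr hInetop
  haveI : IsLocalRing (R ⧸ I) :=
    IsLocalRing.of_surjective' (Ideal.Quotient.mk I) Ideal.Quotient.mk_surjective
  haveI : IsNoetherianRing (R ⧸ I) := PrincipalIdealRing.isNoetherianRing
  set f := Ideal.Quotient.mk I with hf
  -- units lift along f
  have hlift : ∀ d : R, IsUnit (f d) → IsUnit d := by
    intro d hd
    obtain ⟨b, hb⟩ := isUnit_iff_exists_inv.mp hd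
    obtain ⟨e, rfl⟩ := Ideal.Quotient.mk_surjective b
    have : d * e - 1 ∈ I := by
      rw [← Ideal.Quotient.eq]
      simpa using hb
    have hde : IsUnit (d * e) := by
      rw [← IsLocalRing.notMem_maximalIdeal]
      intro hmem
      have : (1 : R) ∈ IsLocalRing.maximalIdeal R := by
        have := (IsLocalRing.maximalIdeal R).sub_mem hmem (hIleM this)
        simpa using this
      exact (IsLocalRing.maximalIdeal.isMaximal R).ne_top (Ideal.eq_top_of_isUnit_mem _ this isUnit_one)
    exact isUnit_of_mul_isUnit_left hde
  have hxM : x ∈ IsLocalRing.maximalIdeal R := by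
    rw [← hsum]
    exact Submodule.mem_sup_left (Submodule.mem_span_singleton_self x)
  -- f x is in the maximal ideal of the quotient
  have hfx : f x ∈ IsLocalRing.maximalIdeal (R ⧸ I) := by
    rw [IsLocalRing.mem_maximalIdeal, mem_nonunits_iff]
    intro hu
    have hxu : IsUnit x := hlift x hu
    exact (IsLocalRing.mem_maximalIdeal x).mp hxM hxu
  -- the maximal ideal of the quotient is generated by f x
  have hmax : IsLocalRing.maximalIdeal (R ⧸ I) = Ideal.span {f x} := by
    obtain ⟨y, hy⟩ := (hpir.principal (IsLocalRing.maximalIdeal (R ⧸ I))).principal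
    obtain ⟨y₀, rfl⟩ := Ideal.Quotient.mk_surjective y
    have hy₀M : y₀ ∈ IsLocalRing.maximalIdeal R := by
      rw [IsLocalRing.mem_maximalIdeal, mem_nonunits_iff]
      intro hu
      have : f y₀ ∈ IsLocalRing.maximalIdeal (R ⧸ I) := by
        rw [hy]; exact Submodule.mem_span_singleton_self _
      exact (IsLocalRing.mem_maximalIdeal _).mp this (hu.map f)
    rw [← hsum] at hy₀M
    obtain ⟨p, hp, q, hq, hpq⟩ := Submodule.mem_sup.mp hy₀M
    obtain ⟨r, hr⟩ := Submodule.mem_span_singleton.mp hp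
    rw [smul_eq_mul] at hr
    have hqx : q * x = 0 := by
      have h1 : q * x ∈ Submodule.span R ({x} : Set R) := by
        have := Submodule.smul_mem (Submodule.span R ({x} : Set R)) q
          (Submodule.mem_span_singleton_self x)
        rwa [smul_eq_mul] at this
      have h2 : q * x ∈ L := L.mul_mem_right x hq
      exact (Submodule.disjoint_def.mp hdisj) _ h1 h2
    have hyrx : f y₀ = f r * f x := by
      rw [← map_mul, hf, Ideal.Quotient.eq, hmemI]
      have heq : y₀ - r * x = q := by rw [← hpq, ← hr]; ring
      rw [heq, hqx]
    apply le_antisymm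
    · rw [hy, hyrx]
      exact Submodule.span_le.mpr (Set.singleton_subset_iff.mpr
        (Ideal.mul_mem_left _ _ (Ideal.subset_span rfl)))
    · exact Submodule.span_le.mpr (Set.singleton_subset_iff.mpr hfx)
  -- express m = c * x
  obtain ⟨c, hc⟩ := Submodule.mem_span_singleton.mp hm
  rw [smul_eq_mul] at hc
  have hcI : f c ≠ 0 := by
    intro h
    rw [hf, Ideal.Quotient.eq_zero_iff_mem, hmemI, hc] at h
    exact hm0 h
  -- Krull intersection
  have hkrull : (⨅ n : ℕ, (Ideal.span {f x}) ^ n) = ⊥ := by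
    rw [← hmax]
    exact Ideal.iInf_pow_eq_bot_of_isLocalRing _ (IsLocalRing.maximalIdeal.isMaximal _).ne_top
  have hex : ∃ n : ℕ, f c ∉ (Ideal.span {f x}) ^ n := by
    by_contra h
    push_neg at h
    have : f c ∈ (⨅ n : ℕ, (Ideal.span {f x}) ^ n) := by
      simp only [Submodule.mem_iInf]; exact h
    rw [hkrull] at this
    exact hcI this
  set n := Nat.find hex with hn
  have hnmem : f c ∉ (Ideal.span {f x}) ^ n := Nat.find_spec hex
  have hn1 : 1 ≤ n := by
    rcases Nat.eq_zero_or_pos n with h | h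
    · exfalso; apply hnmem; rw [h, pow_zero, Ideal.one_eq_top]; trivial
    · exact h
  obtain ⟨k, hk⟩ : ∃ k, n = k + 1 := ⟨n - 1, (Nat.succ_pred_eq_of_pos hn1).symm⟩
  have hkmem : f c ∈ (Ideal.span {f x}) ^ k := by
    by_contra h
    exact Nat.find_min hex (m := k) (by omega) h
  rw [Ideal.span_singleton_pow] at hkmem
  obtain ⟨d, hd⟩ := Ideal.mem_span_singleton'.mp hkmem
  obtain ⟨d₀, rfl⟩ := Ideal.Quotient.mk_surjective d
  -- f d₀ is a unit
  have hdu : IsUnit (f d₀) := by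
    by_contra h
    have hdm : f d₀ ∈ Ideal.span {f x} := by
      rw [← hmax, IsLocalRing.mem_maximalIdeal]; exact h
    apply hnmem
    rw [hk, pow_succ', ← hd]
    exact Ideal.mul_mem_mul hdm
      (Ideal.pow_mem_pow (Ideal.subset_span rfl : f x ∈ Ideal.span {f x}) k)
  have hd₀ : IsUnit d₀ := hlift d₀ hdu
  refine ⟨d₀, k + 1, hd₀, Nat.succ_pos k, ?_⟩
  have hceq : c - d₀ * x ^ k ∈ I := by
    rw [← Ideal.Quotient.eq]
    rw [← hd, hf, map_mul, map_pow]
  rw [hmemI] at hceq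
  rw [sub_mul, sub_eq_zero] at hceq
  rw [← hc, hceq, mul_assoc, ← pow_succ]
end

section
/- Let (R, M) be a commutative local ring with M = Rx ⊕ L where L is a homogeneous semisimple ideal (a direct sum of simple R-modules Rw_λ, λ ∈ Λ) and R/Ann(x) is a principal ideal ring. Then every proper ideal I of R has the form I = Rx' ⊕ (⊕_{γ∈Γ} Rw'_γ) where |Γ| ≤ |Λ|, each Rw'_γ is a simple R-module, and R/Ann(x') is a principal ideal ring. -/
open Submodule

/-- If `A` is disjoint from the supremum of an independent family `B`, the combined
`Option` family is independent. -/
private lemma option_indep {R M : Type*} {ι : Type*} [CommRing R] [AddCommGroup M] [Module R M]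
    (A : Submodule R M) (B : ι → Submodule R M)
    (h1 : iSupIndep B) (h2 : Disjoint A (⨆ i, B i)) :
    iSupIndep (fun o : Option ι => o.elim A B) := by
  intro o
  cases o with
  | none =>
      refine h2.mono_right ?_
      refine iSup_le fun j => iSup_le fun hj => ?_
      cases j with
      | none => exact absurd rfl hj
      | some i => exact le_iSup B i
  | some γ =>
      have hle : (⨆ (j : Option ι) (_ : j ≠ some γ), (Option.elim j A B)) ≤
          A ⊔ ⨆ (i : ι) (_ : i ≠ γ), B i := by
        refine iSup_le fun j => iSup_le fun hj => ?_
        cases j with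
        | none => exact le_sup_left
        | some i =>
            have hi : i ≠ γ := fun h => hj (by rw [h])
            exact le_sup_of_le_right (le_iSup₂ (f := fun i (_ : i ≠ γ) => B i) i hi)
      refine Disjoint.mono_right hle ?_
      rw [disjoint_def]
      intro y hyB hy
      obtain ⟨a, ha, c, hc, hsum⟩ := Submodule.mem_sup.mp hy
      have hcB : c ∈ ⨆ i, B i := (iSup₂_le fun i _ => le_iSup B i) hc
      have haB : a ∈ ⨆ i, B i := by
        have hac : a = y - c := by rw [← hsum]; abel
        rw [hac]
        exact Submodule.sub_mem _ (le_iSup B γ hyB) hcB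
      have ha0 : a = 0 := (disjoint_def.mp h2) a ha haB
      have hyc : y = c := by rw [← hsum, ha0, zero_add]
      rw [hyc] at hyB ⊢
      exact (disjoint_def.mp (h1 γ)) c hyB hc

/-- Over a local ring, the span of a nonzero element killed by the maximal ideal is a
simple module. -/
private lemma simple_span {R : Type} [CommRing R] [IsLocalRing R] (y : R) (hy : y ≠ 0)
    (hkill : ∀ m ∈ IsLocalRing.maximalIdeal R, m * y = 0) :
    IsSimpleModule R (Submodule.span R ({y} : Set R)) := by
  have hle : IsLocalRing.maximalIdeal R ≤ Ideal.torsionOf R R y := fun m hm =>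
    (Ideal.mem_torsionOf_iff y m).mpr (by simpa [smul_eq_mul] using hkill m hm)
  have hne : Ideal.torsionOf R R y ≠ ⊤ := by
    intro h
    have : (1 : R) ∈ Ideal.torsionOf R R y := h ▸ trivial
    rw [Ideal.mem_torsionOf_iff, one_smul] at this
    exact hy this
  have htor : Ideal.torsionOf R R y = IsLocalRing.maximalIdeal R :=
    ((IsLocalRing.maximalIdeal.isMaximal R).eq_of_le hne hle).symm
  haveI : IsSimpleModule R (R ⧸ Ideal.torsionOf R R y) := by
    rw [isSimpleModule_iff_isCoatom, htor]
    exact (IsLocalRing.maximalIdeal.isMaximal R).out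
  exact IsSimpleModule.congr (Ideal.quotTorsionOfEquivSpanSingleton R R y).symm

/-- If `M = Rx ⊕ (⊕_λ Rw_λ)` with each `Rw_λ` simple and `R/Ann(x)` a principal ideal ring,
then every proper ideal `I` has the form `Rx' ⊕ (⊕_{γ∈Γ} Rw'_γ)` with `|Γ| ≤ |Λ|`,
each `Rw'_γ` simple, and `R/Ann(x')` a principal ideal ring. -/
theorem ideal_structure_of_one_nonsimple_summand (R : Type) [CommRing R] [IsLocalRing R]
    (Λ : Type) (x : R) (w : Λ → R)
    (hindep : iSupIndep (fun o : Option Λ =>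
      o.elim (Submodule.span R ({x} : Set R)) (fun l => Submodule.span R ({w l} : Set R))))
    (hsum : Submodule.span R ({x} : Set R) ⊔ (⨆ l, Submodule.span R ({w l} : Set R)) =
      IsLocalRing.maximalIdeal R)
    (hsimple : ∀ l, IsSimpleModule R (Submodule.span R ({w l} : Set R)))
    (hpir : IsPrincipalIdealRing (R ⧸ Ideal.torsionOf R R x)) :
    ∀ I : Ideal R, I ≠ ⊤ →
      ∃ (Γ : Type) (x' : R) (w' : Γ → R),
        Cardinal.mk Γ ≤ Cardinal.mk Λ ∧
        iSupIndep (fun o : Option Γ =>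
          o.elim (Submodule.span R ({x'} : Set R))
            (fun g => Submodule.span R ({w' g} : Set R))) ∧
        Submodule.span R ({x'} : Set R) ⊔ (⨆ g, Submodule.span R ({w' g} : Set R)) = I ∧
        (∀ g, IsSimpleModule R (Submodule.span R ({w' g} : Set R))) ∧
        IsPrincipalIdealRing (R ⧸ Ideal.torsionOf R R x') := by
  classical
  intro I hI
  set Mx : Ideal R := IsLocalRing.maximalIdeal R with hMxdef
  set Rx : Submodule R R := Submodule.span R ({x} : Set R) with hRxdef
  set L : Submodule R R := ⨆ l, Submodule.span R ({w l} : Set R) with hLdef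
  have hIM : I ≤ Mx := IsLocalRing.le_maximalIdeal hI
  -- The maximal ideal kills L
  have hkill : ∀ y ∈ L, ∀ m ∈ Mx, m * y = 0 := by
    have hwl : ∀ l, ∀ m ∈ Mx, m * w l = 0 := by
      intro l
      haveI := hsimple l
      have h2 : Module.annihilator R (Submodule.span R ({w l} : Set R)) = Mx :=
        IsLocalRing.eq_maximalIdeal IsSimpleModule.annihilator_isMaximal
      intro m hm
      have hmem : m ∈ Module.annihilator R (Submodule.span R ({w l} : Set R)) := h2 ▸ hm
      have := Module.mem_annihilator.mp hmem ⟨w l, Submodule.mem_span_singleton_self _⟩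
      simpa [Subtype.ext_iff, smul_eq_mul] using this
    intro y hy m hm
    have : L ≤ LinearMap.ker (LinearMap.mul R R m) := by
      rw [hLdef]
      refine iSup_le fun l => (span_le.mpr ?_)
      intro z hz
      rw [Set.mem_singleton_iff] at hz
      subst hz
      simpa using hwl l m hm
    simpa using this hy
  -- Rx and L are disjoint
  have hdisj : Disjoint Rx L := by
    refine (hindep none).mono_right ?_
    rw [hLdef]
    refine iSup_le fun l => ?_
    exact le_iSup₂ (f := fun (j : Option Λ) (_ : j ≠ none) =>
      Option.elim j (Submodule.span R ({x} : Set R))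
        (fun l => Submodule.span R ({w l} : Set R))) (some l) (by simp)
  -- The projection of I to Rx
  set P : Submodule R R := Rx ⊓ (I ⊔ L) with hPdef
  set J : Ideal R := P.comap (LinearMap.toSpanSingleton R R x) with hJdef
  have hJtor : Ideal.torsionOf R R x ≤ J := by
    intro r hr
    rw [Ideal.mem_torsionOf_iff] at hr
    show LinearMap.toSpanSingleton R R x r ∈ P
    rw [LinearMap.toSpanSingleton_apply, hr]
    exact zero_mem P
  set q := Ideal.Quotient.mk (Ideal.torsionOf R R x) with hqdef
  have hqs : Function.Surjective q := Ideal.Quotient.mk_surjective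
  obtain ⟨ab, hab⟩ := (haveI := IsPrincipalIdealRing.principal (Ideal.map q J); Submodule.IsPrincipal.principal (Ideal.map q J))
  obtain ⟨a, rfl⟩ := hqs ab
  have hJ : J = Ideal.span {a} ⊔ Ideal.torsionOf R R x := by
    have h1 := Ideal.comap_map_of_surjective q hqs J
    have h2 := Ideal.comap_map_of_surjective q hqs (Ideal.span {a})
    have hker : Ideal.comap q ⊥ = Ideal.torsionOf R R x := by
      rw [← RingHom.ker_eq_comap_bot]; exact Ideal.mk_ker
    have hmapspan : Ideal.map q (Ideal.span ({a} : Set R)) = Ideal.span {q a} := by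
      rw [Ideal.map_span, Set.image_singleton]
    rw [hker] at h1 h2
    have heq : J ⊔ Ideal.torsionOf R R x = Ideal.span {a} ⊔ Ideal.torsionOf R R x := by
      rw [← h1, ← h2, hmapspan, hab, Ideal.submodule_span_eq]
    rwa [sup_eq_left.mpr hJtor] at heq
  -- P is generated by a * x
  have hP : P = Submodule.span R ({a * x} : Set R) := by
    apply le_antisymm
    · intro y hy
      obtain ⟨r, hr⟩ := Submodule.mem_span_singleton.mp (hy.1 : y ∈ Rx)
      have hrJ : r ∈ J := by
        show LinearMap.toSpanSingleton R R x r ∈ P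
        rw [LinearMap.toSpanSingleton_apply, hr]
        exact hy
      rw [hJ] at hrJ
      obtain ⟨s, hs, t, ht, hst⟩ := Submodule.mem_sup.mp hrJ
      obtain ⟨u, hu⟩ := Submodule.mem_span_singleton.mp hs
      rw [Ideal.mem_torsionOf_iff, smul_eq_mul] at ht
      refine Submodule.mem_span_singleton.mpr ⟨u, ?_⟩
      rw [← hr, ← hst, smul_eq_mul, smul_eq_mul, ← hu, smul_eq_mul]
      ring_nf
      rw [mul_comm x t, ht]
      ring
    · rw [span_le, Set.singleton_subset_iff]
      have haJ : a ∈ J := by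
        rw [hJ]
        exact Submodule.mem_sup_left (Submodule.mem_span_singleton_self a)
      have := haJ
      show a * x ∈ P
      exact this
  set x₀ : R := a * x with hx₀def
  have hx₀Rx : x₀ ∈ Rx := by
    rw [hRxdef]
    exact Submodule.mem_span_singleton.mpr ⟨a, by rw [smul_eq_mul]⟩
  have hx₀IL : x₀ ∈ I ⊔ L := by
    have : x₀ ∈ P := hP ▸ Submodule.mem_span_singleton_self _
    exact this.2
  obtain ⟨i₀, hi₀I, l₁, hl₁L, hx₀dec⟩ := Submodule.mem_sup.mp hx₀IL
  -- choose x' and l₀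
  obtain ⟨x', l₀, hx'I, hl₀L, hdec, hz⟩ :
      ∃ x' l₀ : R, x' ∈ I ∧ l₀ ∈ L ∧ x' = x₀ + l₀ ∧ (x₀ = 0 → l₀ = 0) := by
    by_cases hx0 : x₀ = 0
    · exact ⟨0, 0, I.zero_mem, L.zero_mem, by rw [hx0, add_zero], fun _ => rfl⟩
    · refine ⟨i₀, -l₁, hi₀I, neg_mem hl₁L, by rw [← hx₀dec]; ring, fun h => absurd h hx0⟩
  have hAnnL : ∀ r : R, r * x₀ = 0 → r * l₀ = 0 := by
    intro r hr
    by_cases h0 : x₀ = 0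
    · rw [hz h0, mul_zero]
    · have hrm : r ∈ Mx := by
        by_contra hru
        rw [hMxdef, IsLocalRing.mem_maximalIdeal, mem_nonunits_iff, not_not] at hru
        refine h0 ?_
        obtain ⟨u, rfl⟩ := hru
        calc x₀ = ↑u⁻¹ * (↑u * x₀) := by rw [← mul_assoc]; simp
          _ = 0 := by rw [hr, mul_zero]
      exact hkill l₀ hl₀L r hrm
  have htorx' : Ideal.torsionOf R R x' = Ideal.torsionOf R R x₀ := by
    ext r
    rw [Ideal.mem_torsionOf_iff, Ideal.mem_torsionOf_iff, smul_eq_mul, smul_eq_mul, hdec,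
      mul_add]
    constructor
    · intro h
      have h1 : r * x₀ ∈ Rx := Rx.smul_mem r hx₀Rx
      have h2 : r * x₀ ∈ L := by
        have : r * x₀ = -(r * l₀) := eq_neg_of_add_eq_zero_left h
        rw [this]
        exact neg_mem (L.smul_mem r hl₀L)
      exact (disjoint_def.mp hdisj) _ h1 h2
    · intro h
      rw [h, hAnnL r h, add_zero]
  have htorxx₀ : Ideal.torsionOf R R x ≤ Ideal.torsionOf R R x₀ := by
    intro r hr
    rw [Ideal.mem_torsionOf_iff] at hr ⊢
    rw [hx₀def, smul_eq_mul, ← mul_assoc, mul_comm r a, mul_assoc, ← smul_eq_mul]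
    rw [smul_eq_mul] at hr
    rw [smul_eq_mul, hr, mul_zero]
  have hpir' : IsPrincipalIdealRing (R ⧸ Ideal.torsionOf R R x') := by
    rw [htorx']
    have hle : Ideal.torsionOf R R x ≤ Ideal.torsionOf R R x₀ := htorxx₀
    exact IsPrincipalIdealRing.of_surjective (Ideal.Quotient.factor hle)
      (Ideal.Quotient.lift_surjective_of_surjective _ _ Ideal.Quotient.mk_surjective)
  -- decomposition of I
  have hIdec : Submodule.span R ({x'} : Set R) ⊔ (I ⊓ L) = I := by
    apply le_antisymm
    · refine sup_le ?_ inf_le_left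
      rw [span_le, Set.singleton_subset_iff]
      exact hx'I
    · intro i hi
      have hiM : i ∈ Rx ⊔ L := by rw [hRxdef, hLdef, hsum]; exact hIM hi
      obtain ⟨y, hy, z, hzL, hyz⟩ := Submodule.mem_sup.mp hiM
      have hyP : y ∈ P := by
        refine ⟨hy, ?_⟩
        have : y = i + (-z) := by rw [← hyz]; ring
        rw [this]
        exact Submodule.add_mem _ (Submodule.mem_sup_left hi) (Submodule.mem_sup_right (neg_mem hzL))
      rw [hP] at hyP
      obtain ⟨s, hs⟩ := Submodule.mem_span_singleton.mp hyP
      refine Submodule.mem_sup.mpr ⟨s * x', Submodule.mem_span_singleton.mpr ⟨s, by rw [smul_eq_mul]⟩,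
        i - s * x', ⟨Submodule.sub_mem _ hi (I.mul_mem_left s hx'I), ?_⟩, by ring⟩
      have : i - s * x' = z - s * l₀ := by
        rw [hdec, ← hyz, ← hs, smul_eq_mul]
        ring
      rw [this]
      exact Submodule.sub_mem _ hzL (L.smul_mem s hl₀L)
  -- the semisimple part
  have htors : Module.IsTorsionBySet R (↥L) ((Mx : Ideal R) : Set R) := by
    intro v m
    ext
    simpa [smul_eq_mul] using hkill v.1 v.2 m.1 m.2
  letI instK : Module (R ⧸ Mx) (↥L) := htors.module
  letI instT : IsScalarTower R (R ⧸ Mx) (↥L) := htors.isScalarTower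
  have hsmulK : ∀ (r : R) (v : ↥L), (Ideal.Quotient.mk Mx r) • v = r • v :=
    fun r v => htors.mk_smul r v
  have halgsur : Function.Surjective (algebraMap R (R ⧸ Mx)) := by
    rw [Ideal.Quotient.algebraMap_eq]
    exact Ideal.Quotient.mk_surjective
  set N' : Submodule (R ⧸ Mx) (↥L) :=
    { carrier := {v : ↥L | (v : R) ∈ I}
      add_mem' := fun {u v} hu hv => by
        simp only [Set.mem_setOf_eq, Submodule.coe_add] at *
        exact I.add_mem hu hv
      zero_mem' := by simp
      smul_mem' := by
        intro c v hv
        obtain ⟨r, rfl⟩ := Ideal.Quotient.mk_surjective c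
        show ((Ideal.Quotient.mk Mx r • v : ↥L) : R) ∈ I
        rw [hsmulK]
        simpa [smul_eq_mul] using I.mul_mem_left r hv } with hN'def
  have hmapN' : Submodule.map L.subtype (N'.restrictScalars R) = I ⊓ L := by
    ext y
    simp only [Submodule.mem_map, Submodule.restrictScalars_mem, Submodule.mem_inf]
    constructor
    · rintro ⟨v, hv, rfl⟩
      exact ⟨hv, v.2⟩
    · rintro ⟨h1, h2⟩
      exact ⟨⟨y, h2⟩, h1, rfl⟩
  haveI : Mx.IsMaximal := IsLocalRing.maximalIdeal.isMaximal R
  letI instF : Field (R ⧸ Mx) := Ideal.Quotient.field Mx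
  set Γ := ↥(Module.Basis.ofVectorSpaceIndex (R ⧸ Mx) (↥N')) with hΓdef
  obtain ⟨b, hbcoe⟩ : ∃ b : Module.Basis Γ (R ⧸ Mx) (↥N'),
      ⇑b = (fun γ : Γ => (γ : ↥N')) :=
    ⟨Module.Basis.ofVectorSpace _ _, Module.Basis.coe_ofVectorSpace _ _⟩
  set vL : Γ → ↥L := fun γ => ((γ : ↥N') : ↥L) with hvLdef
  set w' : Γ → R := fun γ => ((vL γ : ↥L) : R) with hw'def
  have hvLb : vL = N'.subtype ∘ ⇑b := by
    funext γ
    rw [Function.comp_apply, hbcoe]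
    rfl
  have hliK : LinearIndependent (R ⧸ Mx) vL := by
    rw [hvLb]
    exact b.linearIndependent.map' N'.subtype (Submodule.ker_subtype N')
  have hspanK : Submodule.span (R ⧸ Mx) (Set.range vL) = N' := by
    rw [hvLb, Set.range_comp, ← Submodule.map_span, b.span_eq, Submodule.map_subtype_top]
  have hspanR : Submodule.span R (Set.range vL) = N'.restrictScalars R := by
    rw [← Submodule.restrictScalars_span R (R ⧸ Mx) halgsur, hspanK]
  -- sup of R-spans equals I ⊓ L
  have hsupN : (⨆ γ, Submodule.span R ({w' γ} : Set R)) = I ⊓ L := by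
    have h1 : ∀ γ, Submodule.span R ({w' γ} : Set R) =
        Submodule.map L.subtype (Submodule.span R ({vL γ} : Set ↥L)) := by
      intro γ
      rw [Submodule.map_span, Set.image_singleton]
      rfl
    calc (⨆ γ, Submodule.span R ({w' γ} : Set R))
        = ⨆ γ, Submodule.map L.subtype (Submodule.span R ({vL γ} : Set ↥L)) := by
          exact iSup_congr h1
      _ = Submodule.map L.subtype (⨆ γ, Submodule.span R ({vL γ} : Set ↥L)) := by
          rw [Submodule.map_iSup]
      _ = Submodule.map L.subtype (Submodule.span R (Set.range vL)) := by
          rw [Submodule.span_range_eq_iSup]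
      _ = I ⊓ L := by rw [hspanR, hmapN']
  -- independence of the semisimple part
  have hindB : iSupIndep (fun γ => Submodule.span R ({w' γ} : Set R)) := by
    have hK : iSupIndep (fun γ => Submodule.span (R ⧸ Mx) ({vL γ} : Set ↥L)) :=
      hliK.iSupIndep_span_singleton
    intro γ
    rw [disjoint_def]
    intro y hy1 hy2
    obtain ⟨r, hr⟩ := Submodule.mem_span_singleton.mp hy1
    have hy2' : y ∈ Submodule.map L.subtype
        (⨆ (i) (_ : i ≠ γ), Submodule.span R ({vL i} : Set ↥L)) := by
      have : (⨆ (i) (_ : i ≠ γ), Submodule.span R ({w' i} : Set R)) =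
          Submodule.map L.subtype (⨆ (i) (_ : i ≠ γ), Submodule.span R ({vL i} : Set ↥L)) := by
        rw [Submodule.map_iSup]
        refine iSup_congr fun i => ?_
        rw [Submodule.map_iSup]
        refine iSup_congr fun _ => ?_
        rw [Submodule.map_span, Set.image_singleton]
        rfl
      rwa [this] at hy2
    obtain ⟨v, hv, hvy⟩ := Submodule.mem_map.mp hy2'
    have hvK : v ∈ ⨆ (i) (_ : i ≠ γ), Submodule.span (R ⧸ Mx) ({vL i} : Set ↥L) := by
      have hle : (⨆ (i) (_ : i ≠ γ), Submodule.span R ({vL i} : Set ↥L)) ≤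
          Submodule.restrictScalars R
            (⨆ (i) (_ : i ≠ γ), Submodule.span (R ⧸ Mx) ({vL i} : Set ↥L)) := by
        refine iSup_le fun i => iSup_le fun hi => ?_
        refine le_trans (Submodule.span_le_restrictScalars R (R ⧸ Mx) _) ?_
        exact fun z hz => le_iSup₂ (f := fun i (_ : i ≠ γ) =>
          Submodule.span (R ⧸ Mx) ({vL i} : Set ↥L)) i hi hz
      exact hle hv
    have hvspan : v ∈ Submodule.span (R ⧸ Mx) ({vL γ} : Set ↥L) := by
      have hv' : v = r • vL γ := by
        apply Subtype.ext
        show (v : R) = r • w' γ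
        exact hvy.trans hr.symm
      rw [hv', ← hsmulK]
      exact Submodule.smul_mem _ _ (Submodule.mem_span_singleton_self _)
    have hv0 : v = 0 := (disjoint_def.mp (hK γ)) v hvspan hvK
    rw [← hvy, hv0]
    rfl
  -- w' elements are in L and I
  have hw'L : ∀ γ, w' γ ∈ L := fun γ => (vL γ).2
  -- each span is simple
  have hsimple' : ∀ γ, IsSimpleModule R (Submodule.span R ({w' γ} : Set R)) := by
    intro γ
    refine simple_span (R := R) (w' γ) ?_ (fun m hm => hkill _ (hw'L γ) m hm)
    have : vL γ ≠ 0 := hliK.ne_zero γ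
    intro h
    exact this (by
      apply Subtype.ext
      simpa [hw'def] using h)
  -- cardinality bound
  have hcard : Cardinal.mk Γ ≤ Cardinal.mk Λ := by
    have hwL : ∀ l, w l ∈ L := fun l =>
      (le_iSup (fun l => Submodule.span R ({w l} : Set R)) l) (Submodule.mem_span_singleton_self _)
    set g : Λ → ↥L := fun l => ⟨w l, hwL l⟩ with hgdef
    have hgR : Submodule.span R (Set.range g) = ⊤ := by
      apply Submodule.map_injective_of_injective (Submodule.injective_subtype L)
      rw [Submodule.map_span, ← Set.range_comp, Submodule.map_subtype_top]
      have : L.subtype ∘ g = w := rfl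
      rw [this, Submodule.span_range_eq_iSup, ← hLdef]
    have hgK : Submodule.span (R ⧸ Mx) (Set.range g) = ⊤ := by
      apply Submodule.restrictScalars_injective R
      rw [Submodule.restrictScalars_span R (R ⧸ Mx) halgsur, hgR]
      rfl
    have h1 : Cardinal.mk Γ = Module.rank (R ⧸ Mx) (↥N') := b.mk_eq_rank''
    have h2 : Module.rank (R ⧸ Mx) (↥N') ≤ Module.rank (R ⧸ Mx) (↥L) := N'.rank_le
    have h3 : Module.rank (R ⧸ Mx) (↥L) ≤ Cardinal.mk Λ := by
      have hr := rank_span_le (R := R ⧸ Mx) (Set.range g)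
      rw [hgK, rank_top] at hr
      exact le_trans hr Cardinal.mk_range_le
    exact (h1 ▸ h2.trans h3)
  -- disjointness of span x' with the semisimple part
  have hdisjx' : Disjoint (Submodule.span R ({x'} : Set R))
      (⨆ γ, Submodule.span R ({w' γ} : Set R)) := by
    rw [hsupN, disjoint_def]
    intro y hy1 hy2
    obtain ⟨r, hr⟩ := Submodule.mem_span_singleton.mp hy1
    have hyL : y ∈ L := hy2.2
    have hrx₀ : r * x₀ ∈ Rx := Rx.smul_mem r hx₀Rx
    have hrx₀L : r * x₀ ∈ L := by
      have : r * x₀ = y - r * l₀ := by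
        rw [← hr, smul_eq_mul, hdec]; ring
      rw [this]
      exact Submodule.sub_mem _ hyL (L.smul_mem r hl₀L)
    have h0 : r * x₀ = 0 := (disjoint_def.mp hdisj) _ hrx₀ hrx₀L
    rw [← hr, smul_eq_mul, hdec, mul_add, h0, hAnnL r h0, add_zero]
  exact ⟨Γ, x', w', hcard,
    option_indep _ _ hindB hdisjx',
    by rw [hsupN, hIdec],
    hsimple', hpir'⟩
end
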